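/- arXiv:1409.4679 — 4 statements merged into one kernel-verified Lean document; each statement's English description precedes it below -/
import Mathlib

section
/- Let 0 < R < 1/2 and define ξ : (−R, R) → ℝ by ξ(z) = 1/(z² − R²). Then there exists a constant C > 0, depending only on R, such that for all z ∈ (−R, R) and all ε ∈ (0,1): −ξ''(z) − (ξ'(z))² ≤ C and −ε ξ''(z) − (ξ'(z))² ≤ C. -/
open Set

lemma xi_d1 (R y : ℝ) (h : y^2 - R^2 ≠ 0) :
    HasDerivAt (fun z : ℝ => 1 / (z ^ 2 - R ^ 2)) (-(2*y)/(y^2-R^2)^2) y := by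
  have h1 : HasDerivAt (fun z : ℝ => z^2 - R^2) (2*y) y := by
    simpa using (hasDerivAt_pow 2 y).sub_const (R^2)
  simpa [one_div] using h1.fun_inv h

lemma xi_d2 (R y : ℝ) (h : y^2 - R^2 ≠ 0) :
    HasDerivAt (fun z : ℝ => -(2*z)/(z^2-R^2)^2) ((6*y^2+2*R^2)/(y^2-R^2)^3) y := by
  have hn : HasDerivAt (fun z : ℝ => -(2*z)) (-2) y := by
    simpa using (hasDerivAt_id y).const_mul (-2 : ℝ)
  have h1 : HasDerivAt (fun z : ℝ => z^2 - R^2) (2*y) y := by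
    simpa using (hasDerivAt_pow 2 y).sub_const (R^2)
  have hd : HasDerivAt (fun z : ℝ => (z^2-R^2)^2) (2*(y^2-R^2)*(2*y)) y := by
    simpa using h1.fun_pow 2
  have hd0 : (y^2-R^2)^2 ≠ 0 := pow_ne_zero _ h
  have := hn.fun_div hd hd0
  refine this.congr_deriv ?_
  rw [div_eq_div_iff (pow_ne_zero 2 hd0) (pow_ne_zero 3 h)]
  ring

/-- For `0 < R < 1/2` and `ξ(z) = 1/(z² − R²)` on `(−R,R)`, there is a
constant `C > 0` depending only on `R` such that for all `z ∈ (−R,R)` and `ε ∈ (0,1)`: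
`−ξ''(z) − (ξ'(z))² ≤ C` and `−ε ξ''(z) − (ξ'(z))² ≤ C`. -/
theorem barrier_derivative_bound (R : ℝ) (hR0 : 0 < R) (hR : R < 1 / 2) :
    ∃ C : ℝ, 0 < C ∧ ∀ z ∈ Ioo (-R) R, ∀ ε ∈ Ioo (0 : ℝ) 1,
      (-(deriv (deriv fun z : ℝ => 1 / (z ^ 2 - R ^ 2)) z)
          - (deriv (fun z : ℝ => 1 / (z ^ 2 - R ^ 2)) z) ^ 2 ≤ C) ∧
      (-(ε * deriv (deriv fun z : ℝ => 1 / (z ^ 2 - R ^ 2)) z)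
          - (deriv (fun z : ℝ => 1 / (z ^ 2 - R ^ 2)) z) ^ 2 ≤ C) := by
  refine ⟨72 / R^4, by positivity, ?_⟩
  rintro z ⟨hz1, hz2⟩ ε ⟨he0, he1⟩
  have hzR : z^2 < R^2 := by nlinarith
  have hne : z^2 - R^2 ≠ 0 := by nlinarith
  have hR2 : R^2 < 1/4 := by nlinarith
  have hUopen : IsOpen {y : ℝ | y^2 - R^2 ≠ 0} := by
    have : Continuous fun y : ℝ => y^2 - R^2 := by continuity
    exact isOpen_ne.preimage this
  have hmem : {y : ℝ | y^2 - R^2 ≠ 0} ∈ nhds z := hUopen.mem_nhds hne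
  have hEq : deriv (fun z : ℝ => 1 / (z ^ 2 - R ^ 2)) =ᶠ[nhds z]
      (fun z : ℝ => -(2*z)/(z^2-R^2)^2) := by
    filter_upwards [hmem] with y hy
    exact (xi_d1 R y hy).deriv
  have hD1 : deriv (fun z : ℝ => 1 / (z ^ 2 - R ^ 2)) z = -(2*z)/(z^2-R^2)^2 :=
    (xi_d1 R z hne).deriv
  have hD2 : deriv (deriv fun z : ℝ => 1 / (z ^ 2 - R ^ 2)) z
      = (6*z^2+2*R^2)/(z^2-R^2)^3 := by
    rw [hEq.deriv_eq]
    exact (xi_d2 R z hne).deriv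
  rw [hD1, hD2]
  obtain ⟨t, ht0, htR, hsub⟩ : ∃ t : ℝ, 0 < t ∧ t ≤ R^2 ∧ z^2 - R^2 = -t :=
    ⟨R^2 - z^2, by nlinarith, by nlinarith [sq_nonneg z], by ring⟩
  have hz2t : z^2 = R^2 - t := by linarith
  have key : -((6*z^2+2*R^2)/(z^2-R^2)^3) - (-(2*z)/(z^2-R^2)^2)^2 ≤ 72 / R^4 := by
    rw [hsub]
    have h1 : -((6*z^2+2*R^2)/(-t)^3) - (-(2*z)/(-t)^2)^2
        = ((6*z^2+2*R^2)*t - 4*z^2)/t^4 := by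
      have ht' : t ≠ 0 := ne_of_gt ht0
      simp only [show ((-t):ℝ)^3 = -(t^3) from by ring,
        show ((-t):ℝ)^2 = t^2 from by ring, div_neg, neg_neg, div_pow]
      rw [div_sub_div _ _ (pow_ne_zero 3 ht') (by positivity : ((t^2)^2:ℝ) ≠ 0),
        div_eq_div_iff (by positivity) (by positivity)]
      ring
    rw [h1, div_le_div_iff₀ (by positivity) (by positivity), hz2t]
    -- goal: ((6(R²−t)+2R²)t − 4(R²−t)) * R⁴ ≤ 72 t⁴
    rcases le_or_gt (R^2/2) t with hcase | hcase
    · have h_le : 8*R^2*t - 6*t^2 + 4*t - 4*R^2 ≤ 2*R^4 := by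
        nlinarith [mul_nonneg (by nlinarith : (0:ℝ) ≤ R^2 - t)
          (by nlinarith : (0:ℝ) ≤ 2*R^2 - 6*t + 4)]
      have ht4 : (R^2/2)^4 ≤ t^4 :=
        pow_le_pow_left₀ (by positivity) hcase 4
      calc ((6*(R^2 - t) + 2*R^2)*t - 4*(R^2 - t)) * R^4
          = (8*R^2*t - 6*t^2 + 4*t - 4*R^2) * R^4 := by ring
        _ ≤ (2*R^4) * R^4 := mul_le_mul_of_nonneg_right h_le (by positivity)
        _ ≤ 72*t^4 := by nlinarith [ht4, pow_pos hR0 8]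
    · have hh : 8*R^2*t - 6*t^2 + 4*t - 4*R^2 ≤ 0 := by
        nlinarith [mul_lt_mul_of_pos_left hcase (by positivity : (0:ℝ) < 8*R^2),
          sq_nonneg t]
      calc ((6*(R^2 - t) + 2*R^2)*t - 4*(R^2 - t)) * R^4
          = (8*R^2*t - 6*t^2 + 4*t - 4*R^2) * R^4 := by ring
        _ ≤ 0 := mul_nonpos_of_nonpos_of_nonneg hh (le_of_lt (pow_pos hR0 4))
        _ ≤ 72*t^4 := by positivity
  refine ⟨key, le_trans ?_ key⟩
  have hDle : (6*z^2+2*R^2)/(z^2-R^2)^3 ≤ 0 := by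
    apply div_nonpos_of_nonneg_of_nonpos (by positivity)
    rw [hsub, show ((-t):ℝ)^3 = -(t^3) from by ring]
    have := pow_pos ht0 3
    linarith
  have h2 : 1 * ((6*z^2+2*R^2)/(z^2-R^2)^3)
      ≤ ε * ((6*z^2+2*R^2)/(z^2-R^2)^3) :=
    mul_le_mul_of_nonpos_right he1.le hDle
  rw [one_mul] at h2
  linarith
end

section
/- Fix 0 < θ_m < θ_M and α, r > 0. Let (x₀,t₀) ∈ ℝ × (0,∞), let a > 0, and let v be a real-valued C² function with continuous second derivatives on a neighborhood of (x₀,t₀). Set λ = ∂_x v(x₀,t₀), and suppose h ∈ ℝ and Q ∈ C²([θ_m,θ_M]) satisfy (−h + θλ² + r) Q(θ) + α Q''(θ) = 0 for all θ ∈ [θ_m,θ_M], Q'(θ_m) = Q'(θ_M) = 0, Q > 0 on [θ_m,θ_M], and that ∂_t v(x₀,t₀) − h = −a. Define v^ε(x,θ,t) = v(x,t) + ε ln Q(θ). Then there exist s > 0 and ε₁ > 0 such that for all (x,t) with |(x,t) − (x₀,t₀)| < s, all θ ∈ (θ_m,θ_M) and all 0 < ε ≤ ε₁: ∂_t v^ε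 − ε θ ∂²_{xx} v^ε − θ (∂_x v^ε)² − (α/ε) ∂²_{θθ} v^ε − (α/ε²)(∂_θ v^ε)² − r ≤ −a/2. -/
open Set Real Filter

noncomputable section

/-- partial derivative in `x` of `v`. -/
def pd1 (v : ℝ → ℝ → ℝ) (p : ℝ × ℝ) : ℝ :=
  fderiv ℝ (fun q : ℝ × ℝ => v q.1 q.2) p (1, 0)

/-- partial derivative in `t` of `v`. -/
def pd2 (v : ℝ → ℝ → ℝ) (p : ℝ × ℝ) : ℝ :=
  fderiv ℝ (fun q : ℝ × ℝ => v q.1 q.2) p (0, 1)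

/-- second partial derivative in `x` of `v`. -/
def pdxx (v : ℝ → ℝ → ℝ) (p : ℝ × ℝ) : ℝ :=
  fderiv ℝ (pd1 v) p (1, 0)

lemma theta_derivs' (Q : ℝ → ℝ) (θm θM c ε : ℝ) (θ : ℝ) (hθ : θ ∈ Ioo θm θM)
    (hQS : ContDiffOn ℝ 2 Q (Ioo θm θM)) (hpos : ∀ ϑ ∈ Ioo θm θM, 0 < Q ϑ) :
    deriv (fun ϑ => c + ε * Real.log (Q ϑ)) θ = ε * (deriv Q θ / Q θ) ∧
    deriv (deriv fun ϑ => c + ε * Real.log (Q ϑ)) θ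
      = ε * ((deriv (deriv Q) θ * Q θ - deriv Q θ * deriv Q θ) / Q θ ^ 2) := by
  have hSo : IsOpen (Ioo θm θM) := isOpen_Ioo
  have hd1 : ∀ ϑ ∈ Ioo θm θM,
      HasDerivAt (fun ϑ' => c + ε * Real.log (Q ϑ')) (ε * (deriv Q ϑ / Q ϑ)) ϑ := by
    intro ϑ hϑ
    have hQdiff : DifferentiableAt ℝ Q ϑ :=
      (hQS.differentiableOn two_ne_zero).differentiableAt (hSo.mem_nhds hϑ)
    have hlog : HasDerivAt (fun ϑ' => Real.log (Q ϑ')) ((Q ϑ)⁻¹ * deriv Q ϑ) ϑ :=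
      (Real.hasDerivAt_log (ne_of_gt (hpos ϑ hϑ))).comp ϑ hQdiff.hasDerivAt
    have := (hlog.const_mul ε).const_add c
    rw [div_eq_inv_mul]
    exact this
  have h1 : ∀ ϑ ∈ Ioo θm θM,
      deriv (fun ϑ' => c + ε * Real.log (Q ϑ')) ϑ = ε * (deriv Q ϑ / Q ϑ) :=
    fun ϑ hϑ => (hd1 ϑ hϑ).deriv
  refine ⟨h1 θ hθ, ?_⟩
  have hee : (deriv fun ϑ' => c + ε * Real.log (Q ϑ')) =ᶠ[nhds θ]
      fun ϑ => ε * (deriv Q ϑ / Q ϑ) :=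
    eventually_of_mem (hSo.mem_nhds hθ) (fun ϑ hϑ => h1 ϑ hϑ)
  rw [hee.deriv_eq]
  have hQ'd : DifferentiableAt ℝ (deriv Q) θ :=
    ((hQS.deriv_of_isOpen hSo (by norm_num : (1 : WithTop ℕ∞) + 1 ≤ 2)).differentiableOn one_ne_zero).differentiableAt
      (hSo.mem_nhds hθ)
  have hQd : DifferentiableAt ℝ Q θ :=
    (hQS.differentiableOn two_ne_zero).differentiableAt (hSo.mem_nhds hθ)
  have hdiv : HasDerivAt (fun ϑ => deriv Q ϑ / Q ϑ)
      ((deriv (deriv Q) θ * Q θ - deriv Q θ * deriv Q θ) / Q θ ^ 2) θ :=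
    hQ'd.hasDerivAt.div hQd.hasDerivAt (ne_of_gt (hpos θ hθ))
  exact (hdiv.const_mul ε).deriv

section
variable (v : ℝ → ℝ → ℝ)

lemma deriv_t_eq' (B : Set (ℝ × ℝ)) (hB : IsOpen B)
    (hF : ContDiffOn ℝ 2 (fun p : ℝ × ℝ => v p.1 p.2) B)
    (x t : ℝ) (hp : (x, t) ∈ B) (C : ℝ) :
    deriv (fun s' => v x s' + C) t = pd2 v (x, t) := by
  have hdF : DifferentiableAt ℝ (fun p : ℝ × ℝ => v p.1 p.2) (x, t) :=
    (hF.contDiffAt (hB.mem_nhds hp)).differentiableAt two_ne_zero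
  have hline : HasDerivAt (fun s' : ℝ => ((x, s') : ℝ × ℝ)) ((0 : ℝ), (1 : ℝ)) t :=
    (hasDerivAt_const t x).prodMk (hasDerivAt_id t)
  exact ((hdF.hasFDerivAt.comp_hasDerivAt t hline).add_const C).deriv

lemma deriv_x_eq' (B : Set (ℝ × ℝ)) (hB : IsOpen B)
    (hF : ContDiffOn ℝ 2 (fun p : ℝ × ℝ => v p.1 p.2) B)
    (x t : ℝ) (hp : (x, t) ∈ B) (C : ℝ) :
    deriv (fun y => v y t + C) x = pd1 v (x, t) := by
  have hdF : DifferentiableAt ℝ (fun p : ℝ × ℝ => v p.1 p.2) (x, t) :=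
    (hF.contDiffAt (hB.mem_nhds hp)).differentiableAt two_ne_zero
  have hline : HasDerivAt (fun y : ℝ => ((y, t) : ℝ × ℝ)) ((1 : ℝ), (0 : ℝ)) x :=
    (hasDerivAt_id x).prodMk (hasDerivAt_const x t)
  exact ((hdF.hasFDerivAt.comp_hasDerivAt x hline).add_const C).deriv

lemma pd1_contDiffOn (B : Set (ℝ × ℝ)) (hB : IsOpen B)
    (hF : ContDiffOn ℝ 2 (fun p : ℝ × ℝ => v p.1 p.2) B) :
    ContDiffOn ℝ 1 (pd1 v) B := by
  have hf : ContDiffOn ℝ 1 (fderiv ℝ (fun q : ℝ × ℝ => v q.1 q.2)) B :=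
    hF.fderiv_of_isOpen hB (by norm_num)
  exact (ContinuousLinearMap.apply ℝ ℝ ((1 : ℝ), (0 : ℝ))).contDiff.comp_contDiffOn hf

lemma deriv_xx_eq' (B : Set (ℝ × ℝ)) (hB : IsOpen B)
    (hF : ContDiffOn ℝ 2 (fun p : ℝ × ℝ => v p.1 p.2) B)
    (x t : ℝ) (hp : (x, t) ∈ B) (C : ℝ) :
    deriv (deriv fun y => v y t + C) x = pdxx v (x, t) := by
  have hee : (deriv fun y => v y t + C) =ᶠ[nhds x] fun y => pd1 v (y, t) := by
    have hcont : Continuous (fun y : ℝ => ((y, t) : ℝ × ℝ)) := by fun_prop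
    have : ∀ᶠ y in nhds x, ((y, t) : ℝ × ℝ) ∈ B := hcont.continuousAt (hB.mem_nhds hp)
    exact this.mono fun y hy => deriv_x_eq' v B hB hF y t hy C
  rw [hee.deriv_eq]
  have hdG1 : DifferentiableAt ℝ (pd1 v) (x, t) :=
    ((pd1_contDiffOn v B hB hF).contDiffAt (hB.mem_nhds hp)).differentiableAt one_ne_zero
  have hline : HasDerivAt (fun y : ℝ => ((y, t) : ℝ × ℝ)) ((1 : ℝ), (0 : ℝ)) x :=
    (hasDerivAt_id x).prodMk (hasDerivAt_const x t)
  exact (hdG1.hasFDerivAt.comp_hasDerivAt x hline).deriv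

end


lemma mul_lower_aux (θ θM c d : ℝ) (hθ : 0 < θ) (hθM : θ ≤ θM) (hc : 0 ≤ c)
    (hd : -c ≤ d) : -(θM * c) ≤ θ * d := by nlinarith

lemma mul_upper_aux (ε ε₀ θ θM M Hv : ℝ) (hε : 0 < ε) (hεle : ε ≤ ε₀)
    (hθ : 0 < θ) (hθM : θ ≤ θM) (hM : 0 < M) (hH : Hv ≤ M) :
    ε * θ * Hv ≤ ε₀ * θM * M := by
  rcases le_or_gt Hv 0 with h0 | h0
  · have h1 : ε * θ * Hv ≤ 0 :=
      mul_nonpos_of_nonneg_of_nonpos (le_of_lt (mul_pos hε hθ)) h0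
    have h2 : (0:ℝ) ≤ ε₀ * θM * M :=
      mul_nonneg (mul_nonneg (le_trans (le_of_lt hε) hεle)
        (le_of_lt (lt_of_lt_of_le hθ hθM))) (le_of_lt hM)
    linarith
  · have hθθ : 0 < θM := lt_of_lt_of_le hθ hθM
    have h1 : ε * θ * Hv ≤ ε * θ * M :=
      mul_le_mul_of_nonneg_left hH (le_of_lt (mul_pos hε hθ))
    have h2 : ε * θ ≤ ε₀ * θM := by nlinarith
    have h3 : ε * θ * M ≤ ε₀ * θM * M := mul_le_mul_of_nonneg_right h2 (le_of_lt hM)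
    linarith

set_option maxHeartbeats 1000000 in
/-- construction of the perturbed test function. If `v` is `C²` near
`(x₀,t₀)`, `λ = ∂ₓ v(x₀,t₀)`, `(h, Q)` solves the spectral ODE with parameter `λ`
(Neumann conditions, `Q > 0`), and `∂_t v(x₀,t₀) − h = −a` with `a > 0`, then for the
perturbed test function `v^ε(x,θ,t) = v(x,t) + ε ln Q(θ)` there are `s > 0`, `ε₁ > 0`
such that for all `(x,t)` within distance `s` of `(x₀,t₀)`, all `θ ∈ (θm,θM)` and all
`0 < ε ≤ ε₁`:
`∂_t v^ε − ε θ ∂²ₓₓ v^ε − θ (∂ₓ v^ε)² − (α/ε) ∂²_θθ v^ε − (α/ε²)(∂_θ v^ε)² − r ≤ −a/2`. -/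
theorem perturbed_test_function (θm θM α r : ℝ)
    (hθm : 0 < θm) (hθθ : θm < θM) (hα : 0 < α) (hr : 0 < r)
    (x₀ t₀ a h : ℝ) (ht₀ : 0 < t₀) (ha : 0 < a)
    (v : ℝ → ℝ → ℝ) (Q : ℝ → ℝ)
    (hv : ∃ U ∈ nhds (x₀, t₀), ContDiffOn ℝ 2 (fun p : ℝ × ℝ => v p.1 p.2) U)
    (hQreg : ContDiffOn ℝ 2 Q (Icc θm θM))
    (hode : ∀ θ ∈ Icc θm θM,
      (-h + θ * (deriv (fun y => v y t₀) x₀) ^ 2 + r) * Q θ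
          + α * deriv (deriv Q) θ = 0)
    (hNm : deriv Q θm = 0) (hNM : deriv Q θM = 0)
    (hQpos : ∀ θ ∈ Icc θm θM, 0 < Q θ)
    (hvt : deriv (fun s => v x₀ s) t₀ - h = -a) :
    ∃ s : ℝ, 0 < s ∧ ∃ ε₁ : ℝ, 0 < ε₁ ∧
      ∀ x θ t ε : ℝ,
        Real.sqrt ((x - x₀) ^ 2 + (t - t₀) ^ 2) < s → θ ∈ Ioo θm θM →
        0 < ε → ε ≤ ε₁ →
        deriv (fun s' => v x s' + ε * Real.log (Q θ)) t
            - ε * θ * deriv (deriv fun y => v y t + ε * Real.log (Q θ)) x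
            - θ * (deriv (fun y => v y t + ε * Real.log (Q θ)) x) ^ 2
            - α / ε * deriv (deriv fun ϑ => v x t + ε * Real.log (Q ϑ)) θ
            - α / ε ^ 2 * (deriv (fun ϑ => v x t + ε * Real.log (Q ϑ)) θ) ^ 2
            - r ≤ -a / 2 := by
  classical
  obtain ⟨U, hU, hFU⟩ := hv
  obtain ⟨ρ, hρ, hball⟩ := Metric.mem_nhds_iff.mp hU
  have hB : IsOpen (Metric.ball ((x₀, t₀) : ℝ × ℝ) ρ) := Metric.isOpen_ball
  have hp₀ : ((x₀, t₀) : ℝ × ℝ) ∈ Metric.ball ((x₀, t₀) : ℝ × ℝ) ρ := Metric.mem_ball_self hρ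
  have hF : ContDiffOn ℝ 2 (fun p : ℝ × ℝ => v p.1 p.2) (Metric.ball ((x₀, t₀) : ℝ × ℝ) ρ) :=
    hFU.mono hball
  have hθM0 : 0 < θM := lt_trans hθm hθθ
  -- continuity facts
  have hfderivC : ContinuousOn (fderiv ℝ (fun q : ℝ × ℝ => v q.1 q.2))
      (Metric.ball ((x₀, t₀) : ℝ × ℝ) ρ) :=
    hF.continuousOn_fderiv_of_isOpen hB one_le_two
  have hG1c : ContinuousAt (pd1 v) (x₀, t₀) :=
    (((ContinuousLinearMap.apply ℝ ℝ ((1 : ℝ), (0 : ℝ))).continuous.comp_continuousOn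
      hfderivC).continuousAt (hB.mem_nhds hp₀))
  have hG2c : ContinuousAt (pd2 v) (x₀, t₀) :=
    (((ContinuousLinearMap.apply ℝ ℝ ((0 : ℝ), (1 : ℝ))).continuous.comp_continuousOn
      hfderivC).continuousAt (hB.mem_nhds hp₀))
  have hHc : ContinuousAt (pdxx v) (x₀, t₀) :=
    (((ContinuousLinearMap.apply ℝ ℝ ((1 : ℝ), (0 : ℝ))).continuous.comp_continuousOn
      ((pd1_contDiffOn v _ hB hF).continuousOn_fderiv_of_isOpen hB le_rfl)).continuousAt
      (hB.mem_nhds hp₀))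
  -- identify λ and ∂_t v at the base point
  have hlam0 : deriv (fun y => v y t₀) x₀ = pd1 v (x₀, t₀) := by
    have := deriv_x_eq' v _ hB hF x₀ t₀ hp₀ 0
    simpa [deriv_add_const] using this
  have hvt' : pd2 v (x₀, t₀) - h = -a := by
    have h2 := deriv_t_eq' v _ hB hF x₀ t₀ hp₀ 0
    simp only [deriv_add_const] at h2
    rw [← h2]; exact hvt
  set M : ℝ := |pdxx v (x₀, t₀)| + 1 with hMdef
  have hM : 0 < M := by positivity
  have hden1 : (0 : ℝ) < a / (6 * θM) := div_pos ha (by positivity)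
  have hden2 : (0 : ℝ) < a / (6 * θM * M) :=
    div_pos ha (mul_pos (by positivity) hM)
  -- eventual estimates
  have E1 : ∀ᶠ p in nhds ((x₀, t₀) : ℝ × ℝ), |pd2 v p - pd2 v (x₀, t₀)| < a / 6 := by
    have := Metric.tendsto_nhds.mp hG2c (a / 6) (by positivity)
    exact this.mono (by intro p hp; rwa [Real.dist_eq] at hp)
  have E2 : ∀ᶠ p in nhds ((x₀, t₀) : ℝ × ℝ),
      |(pd1 v p) ^ 2 - (pd1 v (x₀, t₀)) ^ 2| < a / (6 * θM) := by
    have hc : ContinuousAt (fun p => (pd1 v p) ^ 2) (x₀, t₀) := hG1c.pow 2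
    have := Metric.tendsto_nhds.mp hc (a / (6 * θM)) hden1
    exact this.mono (by intro p hp; rwa [Real.dist_eq] at hp)
  have E3 : ∀ᶠ p in nhds ((x₀, t₀) : ℝ × ℝ), |pdxx v p| ≤ M := by
    have := Metric.tendsto_nhds.mp hHc 1 one_pos
    refine this.mono ?_
    intro p hp
    rw [Real.dist_eq] at hp
    have habs : |pdxx v p| - |pdxx v (x₀, t₀)| ≤ |pdxx v p - pdxx v (x₀, t₀)| :=
      abs_sub_abs_le_abs_sub _ _
    rw [hMdef]; linarith
  have E4 : ∀ᶠ p in nhds ((x₀, t₀) : ℝ × ℝ), p ∈ Metric.ball ((x₀, t₀) : ℝ × ℝ) ρ :=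
    hB.mem_nhds hp₀
  obtain ⟨δ, hδ, hδall⟩ := Metric.eventually_nhds_iff.mp ((E1.and E2).and (E3.and E4))
  refine ⟨δ, hδ, min 1 (a / (6 * θM * M)), lt_min one_pos hden2, ?_⟩
  intro x θ t ε hs hθ hε hε₁
  have hθ1 := hθ.1
  have hθ2 := hθ.2
  have hθpos : 0 < θ := lt_trans hθm hθ1
  -- (x,t) is in the good neighborhood
  have hdx : |x - x₀| ≤ Real.sqrt ((x - x₀) ^ 2 + (t - t₀) ^ 2) := by
    rw [← Real.sqrt_sq_eq_abs]
    exact Real.sqrt_le_sqrt (by nlinarith [sq_nonneg (t - t₀)])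
  have hdt : |t - t₀| ≤ Real.sqrt ((x - x₀) ^ 2 + (t - t₀) ^ 2) := by
    rw [← Real.sqrt_sq_eq_abs]
    exact Real.sqrt_le_sqrt (by nlinarith [sq_nonneg (x - x₀)])
  have hdist : dist ((x, t) : ℝ × ℝ) (x₀, t₀) < δ := by
    rw [Prod.dist_eq]
    simp only [Real.dist_eq]
    exact lt_of_le_of_lt (max_le hdx hdt) hs
  obtain ⟨⟨h1, h2⟩, h3, hpB⟩ := hδall hdist
  -- rewrite all derivatives
  have hQIoo : ContDiffOn ℝ 2 Q (Ioo θm θM) := hQreg.mono Ioo_subset_Icc_self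
  have hQposIoo : ∀ ϑ ∈ Ioo θm θM, 0 < Q ϑ :=
    fun ϑ hϑ => hQpos ϑ (Ioo_subset_Icc_self hϑ)
  obtain ⟨hT1, hT2⟩ := theta_derivs' Q θm θM (v x t) ε θ hθ hQIoo hQposIoo
  rw [deriv_t_eq' v _ hB hF x t hpB, deriv_x_eq' v _ hB hF x t hpB,
    deriv_xx_eq' v _ hB hF x t hpB, hT1, hT2]
  -- algebra from the ODE
  have hQθ : 0 < Q θ := hQposIoo θ hθ
  have hεne : ε ≠ 0 := ne_of_gt hε
  have hQne : Q θ ≠ 0 := ne_of_gt hQθ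
  have hodeθ := hode θ (Ioo_subset_Icc_self hθ)
  rw [hlam0] at hodeθ
  have hαQ2 : α * deriv (deriv Q) θ = (h - θ * (pd1 v (x₀, t₀)) ^ 2 - r) * Q θ := by
    linear_combination hodeθ
  have hsum : α / ε * (ε * ((deriv (deriv Q) θ * Q θ - deriv Q θ * deriv Q θ) / Q θ ^ 2))
      + α / ε ^ 2 * (ε * (deriv Q θ / Q θ)) ^ 2
      = h - θ * (pd1 v (x₀, t₀)) ^ 2 - r := by
    have hkey : α / ε * (ε * ((deriv (deriv Q) θ * Q θ - deriv Q θ * deriv Q θ) / Q θ ^ 2))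
        + α / ε ^ 2 * (ε * (deriv Q θ / Q θ)) ^ 2 = α * deriv (deriv Q) θ / Q θ := by
      field_simp
      ring
    rw [hkey, hαQ2]
    field_simp
  -- bounds
  have hb1 : pd2 v (x, t) - pd2 v (x₀, t₀) ≤ a / 6 := le_of_lt (abs_lt.mp h1).2
  have hθMc : θM * (a / (6 * θM)) = a / 6 := by field_simp
  have hd1 : -(a / (6 * θM)) ≤ (pd1 v (x, t)) ^ 2 - (pd1 v (x₀, t₀)) ^ 2 :=
    le_of_lt (abs_lt.mp h2).1
  have hb2 : -(a / 6) ≤ θ * ((pd1 v (x, t)) ^ 2 - (pd1 v (x₀, t₀)) ^ 2) := by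
    have := mul_lower_aux θ θM (a / (6 * θM)) _ hθpos (le_of_lt hθ2)
      (le_of_lt hden1) hd1
    rw [hθMc] at this
    exact this
  have hεle : ε ≤ a / (6 * θM * M) := le_trans hε₁ (min_le_right _ _)
  have hεM : (a / (6 * θM * M)) * θM * M = a / 6 := by field_simp
  have hb3 : -(a / 6) ≤ ε * θ * pdxx v (x, t) := by
    have hH : -pdxx v (x, t) ≤ M := le_trans (neg_le_abs _) h3
    have h5 := mul_upper_aux ε (a / (6 * θM * M)) θ θM M (-pdxx v (x, t))
      hε hεle hθpos (le_of_lt hθ2) hM hH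
    rw [hεM] at h5
    have h6 : ε * θ * -pdxx v (x, t) = -(ε * θ * pdxx v (x, t)) := by ring
    linarith only [h5, h6.symm.le, h6.le]
  linarith only [hsum, hb1, hb2, hb3, hvt']

end
end

section
/- Fix constants 0 < θ_m < θ_M and α, r > 0. If λ ∈ ℝ, h ∈ ℝ and Q ∈ C²([θ_m,θ_M]) satisfy (−h + θλ² + r) Q(θ) + α Q''(θ) = 0 for all θ ∈ [θ_m,θ_M], Q'(θ_m) = Q'(θ_M) = 0, Q > 0 on [θ_m,θ_M], and ∫_{θ_m}^{θ_M} Q(θ) dθ = 1, then λ² θ_m + r ≤ h ≤ λ² θ_M + r. -/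
open Set Topology Filter

/-- If `(h, Q)` solves the spectral problem with parameter `λ`
(on `[θm, θM]`, with Neumann boundary conditions, `Q > 0` and `∫ Q = 1`),
then `λ² θm + r ≤ h ≤ λ² θM + r`. -/
theorem spectral_eigenvalue_bounds (θm θM α r lam h : ℝ) (Q : ℝ → ℝ)
    (hθm : 0 < θm) (hθθ : θm < θM) (hα : 0 < α) (hr : 0 < r)
    (hQreg : ContDiffOn ℝ 2 Q (Icc θm θM))
    (hode : ∀ θ ∈ Icc θm θM, (-h + θ * lam ^ 2 + r) * Q θ + α * deriv (deriv Q) θ = 0)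
    (hNm : deriv Q θm = 0) (hNM : deriv Q θM = 0)
    (hQpos : ∀ θ ∈ Icc θm θM, 0 < Q θ)
    (hQnorm : (∫ θ in θm..θM, Q θ) = 1) :
    lam ^ 2 * θm + r ≤ h ∧ h ≤ lam ^ 2 * θM + r := by
  have hle : θm ≤ θM := hθθ.le
  have hl2 : (0:ℝ) ≤ lam ^ 2 := sq_nonneg lam
  have hmem_m : θm ∈ Icc θm θM := left_mem_Icc.2 hle
  have hmem_M : θM ∈ Icc θm θM := right_mem_Icc.2 hle
  -- junk cases at endpoints
  by_cases hdm : DifferentiableAt ℝ (deriv Q) θm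
  swap
  · have hD0 : deriv (deriv Q) θm = 0 := deriv_zero_of_not_differentiableAt hdm
    have := hode θm hmem_m
    rw [hD0] at this
    have hQm := hQpos θm hmem_m
    have hz : -h + θm * lam ^ 2 + r = 0 := by
      rcases mul_eq_zero.mp (by linarith : (-h + θm * lam ^ 2 + r) * Q θm = 0) with h1 | h1
      · exact h1
      · exact absurd h1 (ne_of_gt hQm)
    constructor <;> nlinarith
  by_cases hdM : DifferentiableAt ℝ (deriv Q) θM
  swap
  · have hD0 : deriv (deriv Q) θM = 0 := deriv_zero_of_not_differentiableAt hdM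
    have := hode θM hmem_M
    rw [hD0] at this
    have hQM := hQpos θM hmem_M
    have hz : -h + θM * lam ^ 2 + r = 0 := by
      rcases mul_eq_zero.mp (by linarith : (-h + θM * lam ^ 2 + r) * Q θM = 0) with h1 | h1
      · exact h1
      · exact absurd h1 (ne_of_gt hQM)
    constructor <;> nlinarith
  -- main case
  set G : ℝ → ℝ := derivWithin Q (Icc θm θM) with hG
  have hud : UniqueDiffOn ℝ (Icc θm θM) := uniqueDiffOn_Icc hθθ
  have hGcont : ContinuousOn G (Icc θm θM) :=
    hQreg.continuousOn_derivWithin hud (by norm_num)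
  have hGeq : ∀ x ∈ Ioo θm θM, G x = deriv Q x := fun x hx =>
    derivWithin_of_mem_nhds (Icc_mem_nhds hx.1 hx.2)
  haveI hNB : (𝓝[Ioo θm θM] θm).NeBot := by
    refine mem_closure_iff_nhdsWithin_neBot.1 ?_
    rw [closure_Ioo hθθ.ne]; exact hmem_m
  haveI hNB' : (𝓝[Ioo θm θM] θM).NeBot := by
    refine mem_closure_iff_nhdsWithin_neBot.1 ?_
    rw [closure_Ioo hθθ.ne]; exact hmem_M
  have key : ∀ x ∈ Icc θm θM, DifferentiableAt ℝ (deriv Q) x → deriv Q x = 0 → G x = 0 := by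
    intro x hx hdx hzx
    have h1 : Filter.Tendsto G (𝓝[Ioo θm θM] x) (𝓝 (G x)) :=
      (hGcont x hx).mono_left (nhdsWithin_mono _ Ioo_subset_Icc_self)
    have h2 : Filter.Tendsto (deriv Q) (𝓝[Ioo θm θM] x) (𝓝 (G x)) := by
      refine h1.congr' ?_
      filter_upwards [self_mem_nhdsWithin] with y hy using (hGeq y hy)
    have h3 : Filter.Tendsto (deriv Q) (𝓝[Ioo θm θM] x) (𝓝 (deriv Q x)) :=
      (hdx.continuousAt.tendsto).mono_left nhdsWithin_le_nhds
    have hNBx : (𝓝[Ioo θm θM] x).NeBot := by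
      refine mem_closure_iff_nhdsWithin_neBot.1 ?_
      rw [closure_Ioo hθθ.ne]; exact hx
    have := tendsto_nhds_unique h2 h3
    rw [this, hzx]
  have hGm : G θm = 0 := key θm hmem_m hdm hNm
  have hGM : G θM = 0 := key θM hmem_M hdM hNM
  -- interior regularity
  have hC1 : ContDiffOn ℝ 1 (deriv Q) (Ioo θm θM) :=
    (hQreg.mono Ioo_subset_Icc_self).deriv_of_isOpen isOpen_Ioo (by norm_num)
  have hQx : ∀ x ∈ Ioo θm θM, HasDerivAt (deriv Q) (deriv (deriv Q) x) x := by
    intro x hx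
    have : DifferentiableAt ℝ (deriv Q) x :=
      (hC1.differentiableOn one_ne_zero).differentiableAt (isOpen_Ioo.mem_nhds hx)
    exact this.hasDerivAt
  -- continuity / integrability facts
  have hQc : ContinuousOn Q (Icc θm θM) := hQreg.continuousOn
  have hDeq : ∀ θ ∈ Icc θm θM, deriv (deriv Q) θ = ((h - θ * lam ^ 2 - r) * Q θ) / α := by
    intro θ hθ
    have := hode θ hθ
    field_simp
    linarith
  have hDcont : ContinuousOn (deriv (deriv Q)) (Icc θm θM) := by
    refine ContinuousOn.congr (f := fun θ => ((h - θ * lam ^ 2 - r) * Q θ) / α) ?_ hDeq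
    exact (((by fun_prop : Continuous fun θ : ℝ => h - θ * lam ^ 2 - r).continuousOn.mul
      hQc).div_const α)
  have hDint : IntervalIntegrable (deriv (deriv Q)) MeasureTheory.volume θm θM :=
    ContinuousOn.intervalIntegrable_of_Icc (μ := MeasureTheory.volume) hle hDcont
  have hQint : IntervalIntegrable Q MeasureTheory.volume θm θM :=
    ContinuousOn.intervalIntegrable_of_Icc (μ := MeasureTheory.volume) hle hQc
  have hg1 : ContinuousOn (fun θ => (-h + θ * lam ^ 2 + r) * Q θ) (Icc θm θM) :=
    (by fun_prop : Continuous fun θ : ℝ => -h + θ * lam ^ 2 + r).continuousOn.mul hQc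
  have hg1int := ContinuousOn.intervalIntegrable_of_Icc (μ := MeasureTheory.volume) hle hg1
  -- FTC
  have hFTC : (∫ y in θm..θM, deriv (deriv Q) y) = G θM - G θm := by
    refine intervalIntegral.integral_eq_sub_of_hasDeriv_right_of_le hle hGcont ?_ hDint
    intro x hx
    have heq : G =ᶠ[𝓝 x] deriv Q := by
      filter_upwards [isOpen_Ioo.mem_nhds hx] with y hy using hGeq y hy
    exact ((hQx x hx).congr_of_eventuallyEq heq).hasDerivWithinAt
  have hDzero : (∫ y in θm..θM, deriv (deriv Q) y) = 0 := by
    rw [hFTC, hGm, hGM, sub_zero]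
  -- integrate the ODE
  have hzero : (∫ θ in θm..θM, (-h + θ * lam ^ 2 + r) * Q θ) = 0 := by
    have hsum : (∫ θ in θm..θM, ((-h + θ * lam ^ 2 + r) * Q θ + α * deriv (deriv Q) θ)) = 0 := by
      rw [intervalIntegral.integral_congr (g := fun _ => (0:ℝ))
        (fun θ hθ => hode θ (by rwa [uIcc_of_le hle] at hθ))]
      simp
    rw [intervalIntegral.integral_add hg1int (hDint.const_mul α),
      intervalIntegral.integral_const_mul, hDzero] at hsum
    linarith
  -- extract h
  have hI2int : IntervalIntegrable (fun θ => (θ * lam ^ 2 + r) * Q θ)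
      MeasureTheory.volume θm θM :=
    ((by fun_prop : Continuous fun θ : ℝ => θ * lam ^ 2 + r).continuousOn.mul
      hQc).intervalIntegrable_of_Icc (μ := MeasureTheory.volume) hle
  have hsplit : (∫ θ in θm..θM, (-h + θ * lam ^ 2 + r) * Q θ)
      = (∫ θ in θm..θM, (θ * lam ^ 2 + r) * Q θ) - h := by
    have heq : ∀ θ, (-h + θ * lam ^ 2 + r) * Q θ = (θ * lam ^ 2 + r) * Q θ - h * Q θ :=
      fun θ => by ring
    simp_rw [heq]
    rw [intervalIntegral.integral_sub hI2int (hQint.const_mul h),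
      intervalIntegral.integral_const_mul, hQnorm, mul_one]
  have hIval : h = ∫ θ in θm..θM, (θ * lam ^ 2 + r) * Q θ := by linarith
  -- bounds
  have hlowint : IntervalIntegrable (fun θ => (θm * lam ^ 2 + r) * Q θ)
      MeasureTheory.volume θm θM := hQint.const_mul _
  have hupint : IntervalIntegrable (fun θ => (θM * lam ^ 2 + r) * Q θ)
      MeasureTheory.volume θm θM := hQint.const_mul _
  have hlow : (∫ θ in θm..θM, (θm * lam ^ 2 + r) * Q θ)
      ≤ ∫ θ in θm..θM, (θ * lam ^ 2 + r) * Q θ := by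
    refine intervalIntegral.integral_mono_on hle hlowint hI2int ?_
    intro x hx
    nlinarith [(hQpos x hx).le, hx.1, mul_nonneg (mul_nonneg (sub_nonneg.2 hx.1) hl2)
      (hQpos x hx).le]
  have hup : (∫ θ in θm..θM, (θ * lam ^ 2 + r) * Q θ)
      ≤ ∫ θ in θm..θM, (θM * lam ^ 2 + r) * Q θ := by
    refine intervalIntegral.integral_mono_on hle hI2int hupint ?_
    intro x hx
    nlinarith [(hQpos x hx).le, hx.2, mul_nonneg (mul_nonneg (sub_nonneg.2 hx.2) hl2)
      (hQpos x hx).le]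
  have e1 : (∫ θ in θm..θM, (θm * lam ^ 2 + r) * Q θ) = θm * lam ^ 2 + r := by
    rw [intervalIntegral.integral_const_mul, hQnorm, mul_one]
  have e2 : (∫ θ in θm..θM, (θM * lam ^ 2 + r) * Q θ) = θM * lam ^ 2 + r := by
    rw [intervalIntegral.integral_const_mul, hQnorm, mul_one]
  constructor <;> [nlinarith [hlow]; nlinarith [hup]]
end

section
/- Let Ω ⊂ ℝ be a nonempty bounded interval, let c* > 0, and let g : ℝ → ℝ be a bounded C¹ function that is positive on Ω, negative on ℝ ∖ cl(Ω), attains its maximum at some x̄ ∈ Ω, is strictly increasing on (−∞, x̄] and strictly decreasing on [x̄, ∞). Let w : ℝ × [0,∞) → ℝ be a bounded continuous function with w(·,0) = g that is a viscosity solution of ∂_t w = c* |∂_x w| on ℝ × (0,∞). Then for every t > 0: {x ∈ ℝ : w(x,t) < 0} = {x ∈ ℝ : dist(x,Ω) > c* t} and {x ∈ ℝ : w(x,t) > 0} = {x ∈ ℝ : dist(x,Ω) < c* t}. -/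
open Set Real Filter Topology

noncomputable section

/-- Smooth approximation of `max u 0`. -/
def sk (κ u : ℝ) : ℝ := (u + Real.sqrt (u^2 + κ^2)) / 2

/-- Its derivative. -/
def skd (κ u : ℝ) : ℝ := (1 + u / Real.sqrt (u^2 + κ^2)) / 2

lemma sk_arg_pos {κ : ℝ} (hκ : κ ≠ 0) (u : ℝ) : 0 < u^2 + κ^2 := by positivity

lemma abs_lt_sqrt_sk {κ : ℝ} (hκ : κ ≠ 0) (u : ℝ) : |u| < Real.sqrt (u^2 + κ^2) := by
  have h : |u|^2 < u^2 + κ^2 := by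
    rw [sq_abs]; nlinarith [sq_pos_of_ne_zero hκ]
  nlinarith [Real.sq_sqrt (le_of_lt (sk_arg_pos hκ u)), Real.sqrt_nonneg (u^2 + κ^2),
    abs_nonneg u]

lemma sqrt_sk_pos {κ : ℝ} (hκ : κ ≠ 0) (u : ℝ) : 0 < Real.sqrt (u^2 + κ^2) :=
  Real.sqrt_pos.2 (sk_arg_pos hκ u)

lemma sk_hasDerivAt {κ : ℝ} (hκ : κ ≠ 0) (u : ℝ) : HasDerivAt (sk κ) (skd κ u) u := by
  have h1 : HasDerivAt (fun v : ℝ => v^2 + κ^2) (2*u) u := by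
    simpa using ((hasDerivAt_pow 2 u).add_const (κ^2))
  have h2 : HasDerivAt (fun v : ℝ => Real.sqrt (v^2 + κ^2))
      (1 / (2 * Real.sqrt (u^2 + κ^2)) * (2*u)) u :=
    (Real.hasDerivAt_sqrt (ne_of_gt (sk_arg_pos hκ u))).comp u h1
  have h3 : HasDerivAt (fun v : ℝ => (v + Real.sqrt (v^2 + κ^2)) / 2)
      ((1 + 1 / (2 * Real.sqrt (u^2 + κ^2)) * (2*u)) / 2) u :=
    ((hasDerivAt_id u).add h2).div_const 2
  have he : (1 + 1 / (2 * Real.sqrt (u^2 + κ^2)) * (2*u)) / 2 = skd κ u := by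
    have := (sqrt_sk_pos hκ u).ne'
    unfold skd
    field_simp
  rw [he] at h3
  exact h3

lemma skd_pos {κ : ℝ} (hκ : κ ≠ 0) (u : ℝ) : 0 < skd κ u := by
  have h := abs_lt_sqrt_sk hκ u
  have hs := sqrt_sk_pos hκ u
  have : -1 < u / Real.sqrt (u^2 + κ^2) := by
    rw [lt_div_iff₀ hs]
    nlinarith [neg_abs_le u]
  unfold skd; linarith

lemma sk_nonneg {κ : ℝ} (hκ : κ ≠ 0) (u : ℝ) : 0 ≤ sk κ u := by
  have h := abs_lt_sqrt_sk hκ u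
  have := neg_abs_le u
  unfold sk; linarith

lemma sk_ge_self {κ : ℝ} (hκ : κ ≠ 0) (u : ℝ) : u ≤ sk κ u := by
  have h := abs_lt_sqrt_sk hκ u
  have := le_abs_self u
  unfold sk; linarith

lemma sk_le_of_nonpos {κ : ℝ} (hκ : 0 < κ) {u : ℝ} (hu : u ≤ 0) : sk κ u ≤ κ/2 := by
  have h : Real.sqrt (u^2 + κ^2) ≤ |u| + κ := by
    rw [show u^2 + κ^2 = |u|^2 + κ^2 by rw [sq_abs]]
    have : |u|^2 + κ^2 ≤ (|u| + κ)^2 := by nlinarith [abs_nonneg u, hκ.le]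
    calc Real.sqrt (|u|^2 + κ^2) ≤ Real.sqrt ((|u|+κ)^2) := Real.sqrt_le_sqrt this
      _ = |u| + κ := Real.sqrt_sq (by positivity)
  have : |u| = -u := abs_of_nonpos hu
  unfold sk; rw [this] at h; linarith

lemma sk_contDiff {κ : ℝ} (hκ : κ ≠ 0) : ContDiff ℝ 1 (sk κ) := by
  rw [contDiff_iff_contDiffAt]
  intro u
  have h1 : ContDiffAt ℝ 1 (fun v : ℝ => v^2 + κ^2) u :=
    ((contDiff_id.pow 2).add contDiff_const).contDiffAt
  have h2 : ContDiffAt ℝ 1 (fun v : ℝ => Real.sqrt (v^2 + κ^2)) u :=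
    (Real.contDiffAt_sqrt (ne_of_gt (sk_arg_pos hκ u))).comp u h1
  exact ((contDiff_id.contDiffAt.add h2).div_const 2)


lemma notK_aux (R T : ℝ) (p : ℝ × ℝ) (hp2 : 0 ≤ p.2)
    (h : p ∉ Icc (-R) R ×ˢ Icc 0 T) : R < |p.1| ∨ T < p.2 := by
  rcases not_and_or.1 (fun hc => h (Set.mem_prod.2 hc)) with h | h
  · left
    rcases not_and_or.1 (fun hc => h (Set.mem_Icc.2 hc)) with h1 | h1
    · exact lt_abs.2 (Or.inr (by push_neg at h1; linarith))
    · exact lt_abs.2 (Or.inl (by push_neg at h1; linarith))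
  · right
    rcases not_and_or.1 (fun hc => h (Set.mem_Icc.2 hc)) with h1 | h1
    · exact absurd hp2 h1
    · push_neg at h1; exact h1

lemma visc_upper (cstar : ℝ) (g : ℝ → ℝ) (w : ℝ → ℝ → ℝ)
    (hwcont : ContinuousOn (fun p : ℝ × ℝ => w p.1 p.2) {p : ℝ × ℝ | 0 ≤ p.2})
    (hwinit : ∀ x : ℝ, w x 0 = g x)
    (hsub : ∀ φ : ℝ → ℝ → ℝ, ContDiff ℝ 1 (fun p : ℝ × ℝ => φ p.1 p.2) →
      ∀ x t : ℝ, 0 < t →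
        IsLocalMaxOn (fun p : ℝ × ℝ => w p.1 p.2 - φ p.1 p.2)
          {p : ℝ × ℝ | 0 < p.2} (x, t) →
        deriv (fun s => φ x s) t ≤ cstar * |deriv (fun y => φ y t) x|)
    (Ψ : ℝ → ℝ → ℝ) (hC : ContDiff ℝ 1 (fun p : ℝ × ℝ => Ψ p.1 p.2))
    (hstrict : ∀ x t : ℝ, 0 < t →
      cstar * |deriv (fun y => Ψ y t) x| < deriv (fun s => Ψ x s) t)
    (hinit : ∀ x : ℝ, g x ≤ Ψ x 0)
    (R T : ℝ)
    (hout : ∀ x t : ℝ, 0 ≤ t → (R < |x| ∨ T < t) → w x t ≤ Ψ x t) :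
    ∀ x t : ℝ, 0 ≤ t → w x t ≤ Ψ x t := by
  by_contra hcon
  push_neg at hcon
  obtain ⟨x₁, t₁, ht₁, hlt⟩ := hcon
  set F : ℝ × ℝ → ℝ := fun p => w p.1 p.2 - Ψ p.1 p.2 with hF
  have hFcont : ContinuousOn F {p : ℝ × ℝ | 0 ≤ p.2} :=
    hwcont.sub (hC.continuous.continuousOn)
  set K : Set (ℝ × ℝ) := Icc (-R) R ×ˢ Icc 0 T with hK
  have hp₁ : (x₁, t₁) ∈ K := by
    by_contra hne
    exact absurd (hout x₁ t₁ ht₁ (notK_aux R T (x₁, t₁) ht₁ hne)) (not_le.2 hlt)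
  have hKcpt : IsCompact K := (isCompact_Icc).prod isCompact_Icc
  have hKS : K ⊆ {p : ℝ × ℝ | 0 ≤ p.2} := by
    rintro ⟨x, t⟩ ⟨_, ht⟩; exact ht.1
  obtain ⟨ph, hphK, hphmax⟩ := hKcpt.exists_isMaxOn ⟨(x₁, t₁), hp₁⟩ (hFcont.mono hKS)
  have hFph : 0 < F ph := lt_of_lt_of_le (by simpa [hF] using sub_pos.2 hlt) (hphmax hp₁)
  have hglobal : ∀ p ∈ {p : ℝ × ℝ | 0 ≤ p.2}, F p ≤ F ph := by
    intro p hp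
    by_cases hpK : p ∈ K
    · exact hphmax hpK
    · have h2 := hout p.1 p.2 hp (notK_aux R T p hp hpK)
      have h3 : F p ≤ 0 := by simpa [hF] using sub_nonpos.2 h2
      linarith
  have htpos : 0 < ph.2 := by
    have h0 : (0:ℝ) ≤ ph.2 := hKS hphK
    rcases lt_or_eq_of_le h0 with h | h
    · exact h
    · exfalso
      have h4 : F ph = g ph.1 - Ψ ph.1 0 := by
        simp only [hF, ← h, hwinit]
      have h2 := hinit ph.1
      rw [h4] at hFph; linarith
  have hloc : IsLocalMaxOn (fun p : ℝ × ℝ => w p.1 p.2 - Ψ p.1 p.2)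
      {p : ℝ × ℝ | 0 < p.2} (ph.1, ph.2) := by
    rw [Prod.mk.eta]
    exact eventually_of_mem self_mem_nhdsWithin
      (fun p hp => hglobal p (le_of_lt (show (0:ℝ) < p.2 from hp)))
  have h1 := hsub Ψ hC ph.1 ph.2 htpos hloc
  have h2 := hstrict ph.1 ph.2 htpos
  linarith

lemma visc_lower (cstar : ℝ) (g : ℝ → ℝ) (w : ℝ → ℝ → ℝ)
    (hwcont : ContinuousOn (fun p : ℝ × ℝ => w p.1 p.2) {p : ℝ × ℝ | 0 ≤ p.2})
    (hwinit : ∀ x : ℝ, w x 0 = g x)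
    (hsup : ∀ φ : ℝ → ℝ → ℝ, ContDiff ℝ 1 (fun p : ℝ × ℝ => φ p.1 p.2) →
      ∀ x t : ℝ, 0 < t →
        IsLocalMinOn (fun p : ℝ × ℝ => w p.1 p.2 - φ p.1 p.2)
          {p : ℝ × ℝ | 0 < p.2} (x, t) →
        cstar * |deriv (fun y => φ y t) x| ≤ deriv (fun s => φ x s) t)
    (φ : ℝ → ℝ → ℝ) (hC : ContDiff ℝ 1 (fun p : ℝ × ℝ => φ p.1 p.2))
    (hstrict : ∀ x t : ℝ, 0 < t →
      deriv (fun s => φ x s) t < cstar * |deriv (fun y => φ y t) x|)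
    (hinit : ∀ x : ℝ, φ x 0 ≤ g x)
    (R T : ℝ)
    (hout : ∀ x t : ℝ, 0 ≤ t → (R < |x| ∨ T < t) → φ x t ≤ w x t) :
    ∀ x t : ℝ, 0 ≤ t → φ x t ≤ w x t := by
  by_contra hcon
  push_neg at hcon
  obtain ⟨x₁, t₁, ht₁, hlt⟩ := hcon
  set F : ℝ × ℝ → ℝ := fun p => φ p.1 p.2 - w p.1 p.2 with hF
  have hFcont : ContinuousOn F {p : ℝ × ℝ | 0 ≤ p.2} :=
    (hC.continuous.continuousOn).sub hwcont
  set K : Set (ℝ × ℝ) := Icc (-R) R ×ˢ Icc 0 T with hK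
  have hp₁ : (x₁, t₁) ∈ K := by
    by_contra hne
    exact absurd (hout x₁ t₁ ht₁ (notK_aux R T (x₁, t₁) ht₁ hne)) (not_le.2 hlt)
  have hKcpt : IsCompact K := (isCompact_Icc).prod isCompact_Icc
  have hKS : K ⊆ {p : ℝ × ℝ | 0 ≤ p.2} := by
    rintro ⟨x, t⟩ ⟨_, ht⟩; exact ht.1
  obtain ⟨ph, hphK, hphmax⟩ := hKcpt.exists_isMaxOn ⟨(x₁, t₁), hp₁⟩ (hFcont.mono hKS)
  have hFph : 0 < F ph := lt_of_lt_of_le (by simpa [hF] using sub_pos.2 hlt) (hphmax hp₁)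
  have hglobal : ∀ p ∈ {p : ℝ × ℝ | 0 ≤ p.2}, F p ≤ F ph := by
    intro p hp
    by_cases hpK : p ∈ K
    · exact hphmax hpK
    · have h2 := hout p.1 p.2 hp (notK_aux R T p hp hpK)
      have h3 : F p ≤ 0 := by simpa [hF] using sub_nonpos.2 h2
      linarith
  have htpos : 0 < ph.2 := by
    have h0 : (0:ℝ) ≤ ph.2 := hKS hphK
    rcases lt_or_eq_of_le h0 with h | h
    · exact h
    · exfalso
      have h4 : F ph = φ ph.1 0 - g ph.1 := by
        simp only [hF, ← h, hwinit]
      have h2 := hinit ph.1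
      rw [h4] at hFph; linarith
  have hloc : IsLocalMinOn (fun p : ℝ × ℝ => w p.1 p.2 - φ p.1 p.2)
      {p : ℝ × ℝ | 0 < p.2} (ph.1, ph.2) := by
    rw [Prod.mk.eta]
    refine eventually_of_mem self_mem_nhdsWithin (fun p hp => ?_)
    have := hglobal p (le_of_lt (show (0:ℝ) < p.2 from hp))
    simp only [hF] at this ⊢
    linarith
  have h1 := hsup φ hC ph.1 ph.2 htpos hloc
  have h2 := hstrict ph.1 ph.2 htpos
  linarith


lemma sk_comp_hasDerivAt {κ : ℝ} (hκ : κ ≠ 0) (p q t : ℝ) :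
    HasDerivAt (fun s : ℝ => sk κ (p*s + q)) (skd κ (p*t + q) * p) t := by
  have h1 : HasDerivAt (fun s : ℝ => p*s + q) p t := by
    simpa using ((hasDerivAt_id t).const_mul p).add_const q
  exact (sk_hasDerivAt hκ (p*t+q)).comp t h1

lemma claim2_aux (cstar : ℝ) (hcpos : 0 < cstar) (g : ℝ → ℝ) (w : ℝ → ℝ → ℝ)
    (hwcont : ContinuousOn (fun p : ℝ × ℝ => w p.1 p.2) {p : ℝ × ℝ | 0 ≤ p.2})
    (hwinit : ∀ x : ℝ, w x 0 = g x)
    (hsub : ∀ φ : ℝ → ℝ → ℝ, ContDiff ℝ 1 (fun p : ℝ × ℝ => φ p.1 p.2) →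
      ∀ x t : ℝ, 0 < t →
        IsLocalMaxOn (fun p : ℝ × ℝ => w p.1 p.2 - φ p.1 p.2)
          {p : ℝ × ℝ | 0 < p.2} (x, t) →
        deriv (fun s => φ x s) t ≤ cstar * |deriv (fun y => φ y t) x|)
    (B₀ : ℝ) (hB₀ : 0 < B₀)
    (hgB : ∀ z : ℝ, g z ≤ B₀) (hwB : ∀ x t : ℝ, 0 ≤ t → w x t ≤ B₀)
    (ε : ℝ) (hε : ε = 1 ∨ ε = -1) (z₁ m : ℝ) (hm : 0 < m)
    (hfar : ∀ x : ℝ, ε * z₁ ≤ ε * x → g x ≤ -m)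
    (x₀ t₀ c'' c₂ : ℝ) (ht₀ : 0 < t₀) (hc'' : cstar < c'') (hc₂ : cstar < c₂)
    (hx₀ : ε * z₁ < ε * x₀ - c'' * t₀) : w x₀ t₀ < 0 := by
  have hεabs : |ε| = 1 := by rcases hε with h | h <;> simp [h]
  have hc''pos : 0 < c'' := lt_trans hcpos hc''
  have hc₂pos : 0 < c₂ := lt_trans hcpos hc₂
  set Z₁ : ℝ := ε * z₁ with hZ₁
  set Z₀ : ℝ := ε * x₀ - c'' * t₀ with hZ₀
  set Δ : ℝ := (Z₀ - Z₁) / 2 with hΔ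
  have hΔpos : 0 < Δ := by rw [hΔ]; linarith
  set U₀ : ℝ := Z₁ + Δ with hU₀
  set γ : ℝ := (B₀ + m) / Δ with hγ
  have hγpos : 0 < γ := div_pos (by linarith) hΔpos
  set U₁ : ℝ := ε * x₀ + c₂ * t₀ with hU₁
  set κ : ℝ := m / (2 * (γ + 1)) with hκdef
  have hκ : 0 < κ := div_pos hm (by linarith)
  have hκ' : κ ≠ 0 := ne_of_gt hκ
  set Ψ : ℝ → ℝ → ℝ :=
    fun x t => -m/2 + (γ * sk κ (c''*t + (U₀ - ε*x)) + sk κ (c₂*t + (ε*x - U₁))) with hΨ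
  clear_value Z₁ Z₀ Δ U₀ γ U₁ κ Ψ
  -- smoothness
  have hC : ContDiff ℝ 1 (fun p : ℝ × ℝ => Ψ p.1 p.2) := by
    have h1 : ContDiff ℝ 1 (fun p : ℝ × ℝ => c''*p.2 + (U₀ - ε*p.1)) := by fun_prop
    have h2 : ContDiff ℝ 1 (fun p : ℝ × ℝ => c₂*p.2 + (ε*p.1 - U₁)) := by fun_prop
    have h3 : (fun p : ℝ × ℝ => Ψ p.1 p.2) = (fun p : ℝ × ℝ =>
        -m/2 + (γ * sk κ (c''*p.2 + (U₀ - ε*p.1)) + sk κ (c₂*p.2 + (ε*p.1 - U₁)))) := by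
      funext p; simp only [hΨ]
    rw [h3]
    exact contDiff_const.add
      ((contDiff_const.mul ((sk_contDiff hκ').comp h1)).add ((sk_contDiff hκ').comp h2))
  -- derivatives
  have hDt : ∀ x t : ℝ, deriv (fun s => Ψ x s) t
      = γ * (skd κ (c''*t + (U₀ - ε*x)) * c'') + skd κ (c₂*t + (ε*x - U₁)) * c₂ := by
    intro x t
    have h1 := (sk_comp_hasDerivAt hκ' c'' (U₀ - ε*x) t).const_mul γ
    have h2 := sk_comp_hasDerivAt hκ' c₂ (ε*x - U₁) t
    have h3 : (fun s => Ψ x s) = (fun s =>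
        -m/2 + (γ * sk κ (c''*s + (U₀ - ε*x)) + sk κ (c₂*s + (ε*x - U₁)))) := by
      funext s; simp only [hΨ]
    rw [h3]
    exact ((h1.add h2).const_add (-m/2)).deriv
  have hDx : ∀ x t : ℝ, deriv (fun y => Ψ y t) x
      = γ * (skd κ ((-ε)*x + (c''*t + U₀)) * (-ε)) + skd κ (ε*x + (c₂*t - U₁)) * ε := by
    intro x t
    have hFun : (fun y => Ψ y t) = (fun y => -m/2 +
        (γ * sk κ ((-ε)*y + (c''*t + U₀)) + sk κ (ε*y + (c₂*t - U₁)))) := by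
      funext y
      have e1 : c''*t + (U₀ - ε*y) = (-ε)*y + (c''*t + U₀) := by ring
      have e2 : c₂*t + (ε*y - U₁) = ε*y + (c₂*t - U₁) := by ring
      simp only [hΨ]; rw [e1, e2]
    rw [hFun]
    have h1 := (sk_comp_hasDerivAt hκ' (-ε) (c''*t + U₀) x).const_mul γ
    have h2 := sk_comp_hasDerivAt hκ' ε (c₂*t - U₁) x
    exact ((h1.add h2).const_add (-m/2)).deriv
  -- strict supersolution
  have hstrict : ∀ x t : ℝ, 0 < t →
      cstar * |deriv (fun y => Ψ y t) x| < deriv (fun s => Ψ x s) t := by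
    intro x t _
    rw [hDt, hDx]
    have eA : (-ε)*x + (c''*t + U₀) = c''*t + (U₀ - ε*x) := by ring
    have eB : ε*x + (c₂*t - U₁) = c₂*t + (ε*x - U₁) := by ring
    rw [eA, eB]
    set A := c''*t + (U₀ - ε*x)
    set B := c₂*t + (ε*x - U₁)
    have hA := skd_pos hκ' A
    have hB := skd_pos hκ' B
    have habs : |γ * (skd κ A * (-ε)) + skd κ B * ε| ≤ γ * skd κ A + skd κ B := by
      calc |γ * (skd κ A * (-ε)) + skd κ B * ε|
          ≤ |γ * (skd κ A * (-ε))| + |skd κ B * ε| := abs_add_le _ _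
        _ = γ * skd κ A + skd κ B := by
            rw [abs_mul, abs_mul, abs_mul, abs_neg, hεabs, abs_of_pos hγpos,
              abs_of_pos hA, abs_of_pos hB]; ring
    have h1 : cstar * |γ * (skd κ A * (-ε)) + skd κ B * ε|
        ≤ cstar * (γ * skd κ A + skd κ B) :=
      mul_le_mul_of_nonneg_left habs hcpos.le
    have k1 : 0 < (c'' - cstar) * (γ * skd κ A) := mul_pos (by linarith) (mul_pos hγpos hA)
    have k2 : 0 < (c₂ - cstar) * skd κ B := mul_pos (by linarith) hB
    nlinarith [k1, k2, h1]
  -- initial comparison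
  have hγΔ : γ * Δ = B₀ + m := by
    rw [hγ, div_mul_cancel₀ _ (ne_of_gt hΔpos)]
  have hinit : ∀ x : ℝ, g x ≤ Ψ x 0 := by
    intro x
    have hΨval : Ψ x 0 = -m/2 + (γ * sk κ (c''*0 + (U₀ - ε*x)) + sk κ (c₂*0 + (ε*x - U₁))) := by
      rw [hΨ]
    have hs1 := sk_nonneg hκ' (c''*0 + (U₀ - ε*x))
    have hs2 := sk_nonneg hκ' (c₂*0 + (ε*x - U₁))
    have hγs1 : 0 ≤ γ * sk κ (c''*0 + (U₀ - ε*x)) := mul_nonneg hγpos.le hs1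
    by_cases hside : Z₁ ≤ ε * x
    · have hgx : g x ≤ -m := hfar x hside
      rw [hΨval]; linarith
    · push_neg at hside
      have hs3 : Δ ≤ sk κ (c''*0 + (U₀ - ε*x)) := by
        have := sk_ge_self hκ' (c''*0 + (U₀ - ε*x))
        have harg : Δ ≤ c''*0 + (U₀ - ε*x) := by rw [hU₀]; linarith
        linarith
      have hmul : γ * Δ ≤ γ * sk κ (c''*0 + (U₀ - ε*x)) :=
        mul_le_mul_of_nonneg_left hs3 hγpos.le
      have := hgB x
      rw [hΨval]; rw [hγΔ] at hmul; linarith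
  -- coercivity
  set gmin : ℝ := min γ 1 with hgmin
  have hgminpos : 0 < gmin := lt_min hγpos one_pos
  have hgmin1 : gmin ≤ 1 := min_le_right _ _
  have hgminγ : gmin ≤ γ := min_le_left _ _
  set T : ℝ := (2*((B₀+m)/gmin) + |U₀ - U₁|) / (c''+c₂) with hT
  set R : ℝ := |U₀| + |U₁| + (B₀+m)/gmin with hR
  have hMnn : 0 ≤ (B₀+m)/gmin := div_nonneg (by linarith) hgminpos.le
  have hM1 : B₀ + m ≤ (B₀+m)/gmin := by
    rw [le_div_iff₀ hgminpos]
    nlinarith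
  have hkey : ∀ u : ℝ, (B₀+m)/gmin ≤ u →
      B₀ ≤ -m/2 + γ * sk κ u ∧ B₀ ≤ -m/2 + sk κ u := by
    intro u hu
    have h2 : u ≤ sk κ u := sk_ge_self hκ' u
    constructor
    · have h3 : gmin * ((B₀+m)/gmin) ≤ γ * sk κ u :=
        mul_le_mul hgminγ (by linarith) (by linarith) hγpos.le
      rw [mul_div_cancel₀ _ (ne_of_gt hgminpos)] at h3
      linarith
    · linarith
  have hout : ∀ x t : ℝ, 0 ≤ t → (R < |x| ∨ T < t) → w x t ≤ Ψ x t := by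
    intro x t ht hcase
    have hwxt := hwB x t ht
    set A := c''*t + (U₀ - ε*x) with hA
    set B := c₂*t + (ε*x - U₁) with hB
    have hΨval : Ψ x t = -m/2 + (γ * sk κ A + sk κ B) := by rw [hΨ]
    have hsA := sk_nonneg hκ' A
    have hsB := sk_nonneg hκ' B
    have hγsA : 0 ≤ γ * sk κ A := mul_nonneg hγpos.le hsA
    have hΨB₀ : B₀ ≤ Ψ x t := by
      rcases hcase with hx | htT
      · have habsx : |ε*x| = |x| := by rw [abs_mul, hεabs, one_mul]
        rcases le_total 0 (ε*x) with hs | hs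
        · have hex : ε*x = |x| := by rw [← abs_of_nonneg hs, habsx]
          have h3 : 0 ≤ c₂ * t := mul_nonneg hc₂pos.le ht
          have hBbig : (B₀+m)/gmin ≤ B := by
            rw [hB, hex]
            have := neg_abs_le U₁
            have := le_abs_self U₁
            have := abs_nonneg U₀
            rw [hR] at hx
            linarith
          have := (hkey B hBbig).2
          rw [hΨval]; linarith
        · have hex : ε*x = -|x| := by
            rw [← habsx, abs_of_nonpos hs]; ring
          have h3 : 0 ≤ c'' * t := mul_nonneg hc''pos.le ht
          have hAbig : (B₀+m)/gmin ≤ A := by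
            rw [hA, hU₀]
            rw [hR] at hx
            have h5 : Z₁ + Δ - ε*x = Z₁ + Δ + |x| := by rw [hex]; ring
            rw [h5]
            have := neg_abs_le U₀
            have h6 : -(Z₁ + Δ) ≤ |U₀| := by
              rw [hU₀] at *
              have := neg_abs_le (Z₁ + Δ)
              have := le_abs_self (Z₁ + Δ)
              linarith [neg_le_abs (Z₁ + Δ)]
            have := abs_nonneg U₁
            linarith
          have := (hkey A hAbig).1
          rw [hΨval]; linarith
      · have hsum : 2*((B₀+m)/gmin) < A + B := by
          have h1 : (c''+c₂) * T < (c''+c₂) * t :=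
            mul_lt_mul_of_pos_left htT (by linarith)
          have h2 : (c''+c₂) * T = 2*((B₀+m)/gmin) + |U₀ - U₁| := by
            rw [hT, mul_comm, div_mul_cancel₀ _ (by positivity : c''+c₂ ≠ 0)]
          have h3 : -|U₀ - U₁| ≤ U₀ - U₁ := neg_abs_le _
          have h4 : A + B = (c''+c₂)*t + (U₀ - U₁) := by rw [hA, hB]; ring
          linarith
        rcases le_total A B with hAB | hAB
        · have hBbig : (B₀+m)/gmin ≤ B := by linarith
          have := (hkey B hBbig).2
          rw [hΨval]; linarith
        · have hAbig : (B₀+m)/gmin ≤ A := by linarith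
          have := (hkey A hAbig).1
          have hsB' : B ≤ sk κ B := sk_ge_self hκ' B
          rw [hΨval]; linarith
    linarith
  -- conclude
  have hcomp := visc_upper cstar g w hwcont hwinit hsub Ψ hC hstrict hinit R T hout x₀ t₀ ht₀.le
  have hΨval : Ψ x₀ t₀
      = -m/2 + (γ * sk κ (c''*t₀ + (U₀ - ε*x₀)) + sk κ (c₂*t₀ + (ε*x₀ - U₁))) := by rw [hΨ]
  have hA₀ : c''*t₀ + (U₀ - ε*x₀) = -Δ := by
    rw [hU₀, hΔ, hZ₀, hZ₁]; ring
  have hB₀arg : c₂*t₀ + (ε*x₀ - U₁) = 0 := by rw [hU₁]; ring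
  rw [hA₀, hB₀arg] at hΨval
  have hs1 : sk κ (-Δ) ≤ κ/2 := sk_le_of_nonpos hκ (by linarith)
  have hs2 : sk κ (0:ℝ) ≤ κ/2 := sk_le_of_nonpos hκ (le_refl 0)
  have hκval : (γ+1) * κ = m/2 := by
    have h2 : (2:ℝ)*(γ+1) ≠ 0 := by positivity
    rw [hκdef, mul_div_assoc', div_eq_div_iff h2 two_ne_zero]
    ring
  have hmul : γ * sk κ (-Δ) ≤ γ * (κ/2) := mul_le_mul_of_nonneg_left hs1 hγpos.le
  have hexp : (γ+1) * (κ/2) = γ*(κ/2) + κ/2 := by ring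
  have hfin : Ψ x₀ t₀ ≤ -m/2 + (γ+1) * (κ/2) := by
    rw [hΨval, hexp]; linarith
  have hq : (γ+1) * (κ/2) = m/4 := by
    rw [show (γ+1)*(κ/2) = ((γ+1)*κ)/2 by ring, hκval]; ring
  linarith


lemma claim1_aux (cstar : ℝ) (hcpos : 0 < cstar) (g : ℝ → ℝ) (w : ℝ → ℝ → ℝ)
    (hwcont : ContinuousOn (fun p : ℝ × ℝ => w p.1 p.2) {p : ℝ × ℝ | 0 ≤ p.2})
    (hwinit : ∀ x : ℝ, w x 0 = g x)
    (hsup : ∀ φ : ℝ → ℝ → ℝ, ContDiff ℝ 1 (fun p : ℝ × ℝ => φ p.1 p.2) →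
      ∀ x t : ℝ, 0 < t →
        IsLocalMinOn (fun p : ℝ × ℝ => w p.1 p.2 - φ p.1 p.2)
          {p : ℝ × ℝ | 0 < p.2} (x, t) →
        cstar * |deriv (fun y => φ y t) x| ≤ deriv (fun s => φ x s) t)
    (B₀ : ℝ) (hB₀ : 0 < B₀)
    (hgB : ∀ z : ℝ, -B₀ ≤ g z) (hwB : ∀ x t : ℝ, 0 ≤ t → -B₀ ≤ w x t)
    (y₀ ζ μ β : ℝ) (hζ : 0 < ζ) (hμ : 0 < μ) (hβ : 1 ≤ β)
    (hgJ : ∀ z : ℝ, |z - y₀| ≤ ζ → μ ≤ g z)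
    (hgMid : ∀ z : ℝ, ζ ≤ |z - y₀| → |z - y₀| ≤ ζ + (μ/2 + B₀ + 1) →
      μ - β*(|z - y₀| - ζ) ≤ g z)
    (x₀ t₀ : ℝ) (ht₀ : 0 < t₀) (hxy : |x₀ - y₀| < cstar * t₀) : 0 < w x₀ t₀ := by
  have hβ0 : 0 < β := lt_of_lt_of_le one_pos hβ
  -- direction
  obtain ⟨ε, hε, hεx⟩ : ∃ ε : ℝ, (ε = 1 ∨ ε = -1) ∧ ε * (x₀ - y₀) = |x₀ - y₀| := by
    rcases le_total y₀ x₀ with h | h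
    · exact ⟨1, Or.inl rfl, by rw [abs_of_nonneg (by linarith)]; ring⟩
    · exact ⟨-1, Or.inr rfl, by rw [abs_of_nonpos (by linarith)]; ring⟩
  have hεabs : |ε| = 1 := by rcases hε with h | h <;> simp [h]
  set D : ℝ := |x₀ - y₀| with hD
  have hD0 : 0 ≤ D := abs_nonneg _
  -- speed
  set c' : ℝ := min cstar ((D + ζ)/t₀) with hc'
  have hc'pos : 0 < c' := lt_min hcpos (div_pos (by linarith) ht₀)
  have hc'le : c' ≤ cstar := min_le_left _ _
  set G : ℝ := c'*t₀ - D with hG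
  have hGpos : 0 < G := by
    rw [hG]
    rcases min_cases cstar ((D + ζ)/t₀) with ⟨hmin, _⟩ | ⟨hmin, _⟩
    · rw [hc', hmin]; linarith
    · rw [hc', hmin, div_mul_cancel₀ _ (ne_of_gt ht₀)]; linarith
  have hGle : G ≤ ζ := by
    rw [hG]
    have h1 : c' ≤ (D + ζ)/t₀ := min_le_right _ _
    have h2 : c' * t₀ ≤ D + ζ := by
      rw [← div_mul_cancel₀ (D + ζ) (ne_of_gt ht₀)]
      exact mul_le_mul_of_nonneg_right h1 ht₀.le
    linarith
  set Y : ℝ := ε * y₀ with hY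
  set κ : ℝ := μ / (2*(2*β + 1)) with hκdef
  have hκ : 0 < κ := div_pos hμ (by linarith)
  have hκ' : κ ≠ 0 := ne_of_gt hκ
  set φ : ℝ → ℝ → ℝ := fun x t => μ/2 -
    (β * sk κ ((-c')*t + (ε*x - Y)) +
      (β * sk κ (c'*t + ((Y - ζ) - ε*x)) + sk κ (1*t + (-t₀)))) with hφ
  clear_value D c' G Y κ φ
  -- smoothness
  have hC : ContDiff ℝ 1 (fun p : ℝ × ℝ => φ p.1 p.2) := by
    have h1 : ContDiff ℝ 1 (fun p : ℝ × ℝ => (-c')*p.2 + (ε*p.1 - Y)) := by fun_prop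
    have h2 : ContDiff ℝ 1 (fun p : ℝ × ℝ => c'*p.2 + ((Y - ζ) - ε*p.1)) := by fun_prop
    have h3 : ContDiff ℝ 1 (fun p : ℝ × ℝ => 1*p.2 + (-t₀)) := by fun_prop
    have h4 : (fun p : ℝ × ℝ => φ p.1 p.2) = (fun p : ℝ × ℝ => μ/2 -
        (β * sk κ ((-c')*p.2 + (ε*p.1 - Y)) +
          (β * sk κ (c'*p.2 + ((Y - ζ) - ε*p.1)) + sk κ (1*p.2 + (-t₀))))) := by
      funext p; simp only [hφ]
    rw [h4]
    exact contDiff_const.sub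
      ((contDiff_const.mul ((sk_contDiff hκ').comp h1)).add
        ((contDiff_const.mul ((sk_contDiff hκ').comp h2)).add ((sk_contDiff hκ').comp h3)))
  -- time derivative
  have hDt : ∀ x t : ℝ, deriv (fun s => φ x s) t =
      -(β * (skd κ ((-c')*t + (ε*x - Y)) * (-c')) +
        (β * (skd κ (c'*t + ((Y - ζ) - ε*x)) * c') + skd κ (1*t + (-t₀)) * 1)) := by
    intro x t
    have hfun : (fun s => φ x s) = (fun s => μ/2 -
        (β * sk κ ((-c')*s + (ε*x - Y)) +
          (β * sk κ (c'*s + ((Y - ζ) - ε*x)) + sk κ (1*s + (-t₀))))) := by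
      funext s; simp only [hφ]
    rw [hfun]
    have h1 := (sk_comp_hasDerivAt hκ' (-c') (ε*x - Y) t).const_mul β
    have h2 := (sk_comp_hasDerivAt hκ' c' ((Y - ζ) - ε*x) t).const_mul β
    have h3 := sk_comp_hasDerivAt hκ' 1 (-t₀) t
    exact ((h1.add (h2.add h3)).const_sub (μ/2)).deriv
  -- space derivative
  have hDx : ∀ x t : ℝ, deriv (fun y => φ y t) x =
      -(β * (skd κ (ε*x + ((-c')*t - Y)) * ε) +
        (β * (skd κ ((-ε)*x + (c'*t + (Y - ζ))) * (-ε)) + 0)) := by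
    intro x t
    have hfun : (fun y => φ y t) = (fun y => μ/2 -
        (β * sk κ (ε*y + ((-c')*t - Y)) +
          (β * sk κ ((-ε)*y + (c'*t + (Y - ζ))) + sk κ (1*t + (-t₀))))) := by
      funext y
      have e1 : (-c')*t + (ε*y - Y) = ε*y + ((-c')*t - Y) := by ring
      have e2 : c'*t + ((Y - ζ) - ε*y) = (-ε)*y + (c'*t + (Y - ζ)) := by ring
      simp only [hφ]; rw [e1, e2]
    rw [hfun]
    have h1 := (sk_comp_hasDerivAt hκ' ε ((-c')*t - Y) x).const_mul β
    have h2 := (sk_comp_hasDerivAt hκ' (-ε) (c'*t + (Y - ζ)) x).const_mul β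
    have h3 : HasDerivAt (fun _ : ℝ => sk κ (1*t + (-t₀))) 0 x := hasDerivAt_const _ _
    exact ((h1.add (h2.add h3)).const_sub (μ/2)).deriv
  -- strict subsolution
  have hstrict : ∀ x t : ℝ, 0 < t →
      deriv (fun s => φ x s) t < cstar * |deriv (fun y => φ y t) x| := by
    intro x t _
    rw [hDt, hDx]
    have eA : ε*x + ((-c')*t - Y) = (-c')*t + (ε*x - Y) := by ring
    have eB : (-ε)*x + (c'*t + (Y - ζ)) = c'*t + ((Y - ζ) - ε*x) := by ring
    rw [eA, eB]
    set SA := skd κ ((-c')*t + (ε*x - Y)) with hSA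
    set SB := skd κ (c'*t + ((Y - ζ) - ε*x)) with hSB
    set SC := skd κ (1*t + (-t₀)) with hSC
    have hSCpos : 0 < SC := skd_pos hκ' _
    have eDx : -(β * (SA * ε) + (β * (SB * (-ε)) + 0)) = -(ε * (β * (SA - SB))) := by ring
    rw [eDx, abs_neg, abs_mul, hεabs, one_mul, abs_mul, abs_of_pos hβ0]
    have eDt : -(β * (SA * (-c')) + (β * (SB * c') + SC * 1))
        = (β*c')*(SA - SB) - SC := by ring
    rw [eDt]
    have h1 : (β*c')*(SA - SB) ≤ (β*c')*|SA - SB| :=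
      mul_le_mul_of_nonneg_left (le_abs_self _) (by positivity)
    have h2 : (β*c')*|SA - SB| ≤ (β*cstar)*|SA - SB| :=
      mul_le_mul_of_nonneg_right (by nlinarith) (abs_nonneg _)
    have e3 : cstar * (β * |SA - SB|) = (β*cstar)*|SA - SB| := by ring
    rw [e3]
    linarith
  -- pointwise upper bound on the bump away from the peak
  have hphile : ∀ x t : ℝ, ζ ≤ |ε*x - c'*t - Y| →
      φ x t ≤ μ/2 - β*(|ε*x - c'*t - Y| - ζ) := by
    intro x t hzt
    have hφval : φ x t = μ/2 -
        (β * sk κ ((-c')*t + (ε*x - Y)) +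
          (β * sk κ (c'*t + ((Y - ζ) - ε*x)) + sk κ (1*t + (-t₀)))) := by
      simp only [hφ]
    have hs1 := sk_nonneg hκ' ((-c')*t + (ε*x - Y))
    have hs2 := sk_nonneg hκ' (c'*t + ((Y - ζ) - ε*x))
    have hs3 := sk_nonneg hκ' (1*t + (-t₀))
    have hb1 : 0 ≤ β * sk κ ((-c')*t + (ε*x - Y)) := mul_nonneg hβ0.le hs1
    have hb2 : 0 ≤ β * sk κ (c'*t + ((Y - ζ) - ε*x)) := mul_nonneg hβ0.le hs2
    have he : β*(|ε*x - c'*t - Y| - ζ) = β*|ε*x - c'*t - Y| - β*ζ := by ring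
    have hβζ : 0 ≤ β*ζ := mul_nonneg hβ0.le hζ.le
    rcases le_total Y (ε*x - c'*t) with h | h
    · have habs : |ε*x - c'*t - Y| = (-c')*t + (ε*x - Y) := by
        rw [abs_of_nonneg (by linarith)]; ring
      have hge : |ε*x - c'*t - Y| ≤ sk κ ((-c')*t + (ε*x - Y)) := by
        rw [habs]; exact sk_ge_self hκ' _
      have := mul_le_mul_of_nonneg_left hge hβ0.le
      rw [hφval, he]; linarith
    · have habs : |ε*x - c'*t - Y| - ζ ≤ c'*t + ((Y - ζ) - ε*x) := by
        rw [abs_of_nonpos (by linarith)]; linarith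
      have hge : |ε*x - c'*t - Y| - ζ ≤ sk κ (c'*t + ((Y - ζ) - ε*x)) :=
        le_trans habs (sk_ge_self hκ' _)
      have := mul_le_mul_of_nonneg_left hge hβ0.le
      rw [hφval, he]; linarith
  -- initial condition
  have hinit : ∀ x : ℝ, φ x 0 ≤ g x := by
    intro x
    have habs0 : |ε*x - c'*0 - Y| = |x - y₀| := by
      have : ε*x - c'*0 - Y = ε*(x - y₀) := by rw [hY]; ring
      rw [this, abs_mul, hεabs, one_mul]
    rcases le_total (|x - y₀|) ζ with hcase | hcase
    · have hgx := hgJ x hcase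
      have hφval : φ x 0 = μ/2 -
          (β * sk κ ((-c')*0 + (ε*x - Y)) +
            (β * sk κ (c'*0 + ((Y - ζ) - ε*x)) + sk κ (1*0 + (-t₀)))) := by
        simp only [hφ]
      have hs1 := sk_nonneg hκ' ((-c')*0 + (ε*x - Y))
      have hs2 := sk_nonneg hκ' (c'*0 + ((Y - ζ) - ε*x))
      have hs3 := sk_nonneg hκ' (1*0 + (-t₀))
      have hb1 : 0 ≤ β * sk κ ((-c')*0 + (ε*x - Y)) := mul_nonneg hβ0.le hs1
      have hb2 : 0 ≤ β * sk κ (c'*0 + ((Y - ζ) - ε*x)) := mul_nonneg hβ0.le hs2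
      rw [hφval]
      set s1 := sk κ ((-c')*0 + (ε*x - Y)) with hseta
      set s2 := sk κ (c'*0 + ((Y - ζ) - ε*x)) with hsetb
      set s3 := sk κ (1*0 + (-t₀)) with hsetc
      linarith [hgx, hμ, hb1, hb2, hs3]
    · have h1 := hphile x 0 (by rw [habs0]; exact hcase)
      rw [habs0] at h1
      rcases le_total (|x - y₀|) (ζ + (μ/2 + B₀ + 1)) with hcase2 | hcase2
      · have h2 := hgMid x hcase hcase2
        have : 0 ≤ β*(|x - y₀| - ζ) := mul_nonneg hβ0.le (by linarith)
        linarith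
      · have h2 := hgB x
        have h3 : μ/2 + B₀ + 1 ≤ |x - y₀| - ζ := by linarith
        have h4 : β*(μ/2 + B₀ + 1) ≤ β*(|x - y₀| - ζ) :=
          mul_le_mul_of_nonneg_left h3 hβ0.le
        have h5 : 1*(μ/2 + B₀ + 1) ≤ β*(μ/2 + B₀ + 1) :=
          mul_le_mul_of_nonneg_right hβ (by linarith)
        linarith
  -- coercivity
  set T : ℝ := t₀ + μ/2 + B₀ + 1 with hT
  set R : ℝ := cstar*T + |y₀| + ζ + (μ/2 + B₀ + 1) with hR
  have hTpos : 0 < T := by rw [hT]; linarith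
  have hout : ∀ x t : ℝ, 0 ≤ t → (R < |x| ∨ T < t) → φ x t ≤ w x t := by
    intro x t ht hcase
    have hw := hwB x t ht
    suffices h : φ x t ≤ -B₀ by linarith
    by_cases htT : T < t
    · -- far in time
      have hφval : φ x t = μ/2 -
          (β * sk κ ((-c')*t + (ε*x - Y)) +
            (β * sk κ (c'*t + ((Y - ζ) - ε*x)) + sk κ (1*t + (-t₀)))) := by
        simp only [hφ]
      have hs1 := sk_nonneg hκ' ((-c')*t + (ε*x - Y))
      have hs2 := sk_nonneg hκ' (c'*t + ((Y - ζ) - ε*x))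
      have hb1 : 0 ≤ β * sk κ ((-c')*t + (ε*x - Y)) := mul_nonneg hβ0.le hs1
      have hb2 : 0 ≤ β * sk κ (c'*t + ((Y - ζ) - ε*x)) := mul_nonneg hβ0.le hs2
      have hs3 : t - t₀ ≤ sk κ (1*t + (-t₀)) := by
        have := sk_ge_self hκ' (1*t + (-t₀))
        linarith [this]
      have h4 : μ/2 + B₀ + 1 < t - t₀ := by rw [hT] at htT; linarith
      rw [hφval]
      set s1 := sk κ ((-c')*t + (ε*x - Y))
      set s2 := sk κ (c'*t + ((Y - ζ) - ε*x))
      set s3 := sk κ (1*t + (-t₀))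
      linarith
    · -- far in space
      push_neg at htT
      rcases hcase with hx | hxT
      · have hct : c'*t ≤ cstar*T := by
          have h1 : c'*t ≤ cstar*t := mul_le_mul_of_nonneg_right hc'le ht
          have h2 : cstar*t ≤ cstar*T := mul_le_mul_of_nonneg_left htT hcpos.le
          linarith
        have habs1 : |x| - |y₀| ≤ |x - y₀| := abs_sub_abs_le_abs_sub x y₀
        have habs2 : |x - y₀| = |ε*x - Y| := by
          rw [hY, show ε*x - ε*y₀ = ε*(x - y₀) by ring, abs_mul, hεabs, one_mul]
        have habs3 : |ε*x - Y| - |c'*t| ≤ |ε*x - Y - c'*t| := abs_sub_abs_le_abs_sub _ _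
        have habs4 : |c'*t| = c'*t := abs_of_nonneg (mul_nonneg hc'pos.le ht)
        have heq : ε*x - Y - c'*t = ε*x - c'*t - Y := by ring
        rw [heq] at habs3
        have hA : ζ + (μ/2 + B₀ + 1) < |ε*x - c'*t - Y| := by
          rw [hR] at hx; rw [habs4] at habs3; linarith
        have h1 := hphile x t (by linarith)
        have h2 : β*(μ/2 + B₀ + 1) ≤ β*(|ε*x - c'*t - Y| - ζ) :=
          mul_le_mul_of_nonneg_left (by linarith) hβ0.le
        have h3 : 1*(μ/2 + B₀ + 1) ≤ β*(μ/2 + B₀ + 1) :=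
          mul_le_mul_of_nonneg_right hβ (by linarith)
        linarith
      · linarith
  -- comparison
  have hcomp := visc_lower cstar g w hwcont hwinit hsup φ hC hstrict hinit R T hout x₀ t₀ ht₀.le
  -- evaluation at (x₀, t₀)
  have hA : (-c')*t₀ + (ε*x₀ - Y) = -G := by
    rw [hG, hY, ← hεx]; ring
  have hB : c'*t₀ + ((Y - ζ) - ε*x₀) = G - ζ := by
    rw [hG, hY, ← hεx]; ring
  have hCarg : 1*t₀ + (-t₀) = 0 := by ring
  have hφval : φ x₀ t₀ = μ/2 -
      (β * sk κ (-G) + (β * sk κ (G - ζ) + sk κ 0)) := by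
    simp only [hφ]; rw [hA, hB, hCarg]
  have hs1 : sk κ (-G) ≤ κ/2 := sk_le_of_nonpos hκ (by linarith)
  have hs2 : sk κ (G - ζ) ≤ κ/2 := sk_le_of_nonpos hκ (by linarith)
  have hs3 : sk κ (0:ℝ) ≤ κ/2 := sk_le_of_nonpos hκ le_rfl
  have hm1 : β * sk κ (-G) ≤ β * (κ/2) := mul_le_mul_of_nonneg_left hs1 hβ0.le
  have hm2 : β * sk κ (G - ζ) ≤ β * (κ/2) := mul_le_mul_of_nonneg_left hs2 hβ0.le
  have hκval : (2*β + 1) * κ = μ/2 := by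
    have h2 : (2:ℝ)*(2*β + 1) ≠ 0 := by positivity
    rw [hκdef, mul_div_assoc', div_eq_div_iff h2 two_ne_zero]
    ring
  have hsum : β * (κ/2) + (β * (κ/2) + κ/2) = ((2*β + 1) * κ)/2 := by ring
  have hφpos : 0 < φ x₀ t₀ := by
    rw [hφval]
    have : β * sk κ (-G) + (β * sk κ (G - ζ) + sk κ 0) ≤ ((2*β + 1) * κ)/2 := by
      rw [← hsum]; linarith
    rw [hκval] at this
    linarith
  linarith


/-- characterization of the front for the eikonal equation
`∂_t w = c* |∂ₓ w|`. If `g` is a bounded `C¹` profile, positive on the nonempty bounded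
interval `Ω`, negative off `cl(Ω)`, with a maximum at `x̄ ∈ Ω`, strictly increasing on
`(−∞, x̄]` and strictly decreasing on `[x̄, ∞)`, and `w` is a bounded continuous
viscosity solution with `w(·,0) = g`, then for every `t > 0`:
`{w(·,t) < 0} = {dist(·,Ω) > c* t}` and `{w(·,t) > 0} = {dist(·,Ω) < c* t}`. -/
theorem front_characterization (Ω : Set ℝ) (cstar : ℝ) (g : ℝ → ℝ) (xbar : ℝ)
    (w : ℝ → ℝ → ℝ)
    (hΩne : Ω.Nonempty) (hΩbd : Bornology.IsBounded Ω) (hΩint : OrdConnected Ω)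
    (hc : 0 < cstar)
    (hg1 : ContDiff ℝ 1 g) (hgbd : ∃ B : ℝ, ∀ x : ℝ, |g x| ≤ B)
    (hgpos : ∀ x ∈ Ω, 0 < g x) (hgneg : ∀ x ∉ closure Ω, g x < 0)
    (hxbar : xbar ∈ Ω) (hgmax : ∀ x : ℝ, g x ≤ g xbar)
    (hgmono : StrictMonoOn g (Iic xbar)) (hganti : StrictAntiOn g (Ici xbar))
    (hwcont : ContinuousOn (fun p : ℝ × ℝ => w p.1 p.2) {p : ℝ × ℝ | 0 ≤ p.2})
    (hwbd : ∃ B : ℝ, ∀ x t : ℝ, 0 ≤ t → |w x t| ≤ B)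
    (hwinit : ∀ x : ℝ, w x 0 = g x)
    (hsub : ∀ φ : ℝ → ℝ → ℝ, ContDiff ℝ 1 (fun p : ℝ × ℝ => φ p.1 p.2) →
      ∀ x t : ℝ, 0 < t →
        IsLocalMaxOn (fun p : ℝ × ℝ => w p.1 p.2 - φ p.1 p.2)
          {p : ℝ × ℝ | 0 < p.2} (x, t) →
        deriv (fun s => φ x s) t ≤ cstar * |deriv (fun y => φ y t) x|)
    (hsup : ∀ φ : ℝ → ℝ → ℝ, ContDiff ℝ 1 (fun p : ℝ × ℝ => φ p.1 p.2) →
      ∀ x t : ℝ, 0 < t →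
        IsLocalMinOn (fun p : ℝ × ℝ => w p.1 p.2 - φ p.1 p.2)
          {p : ℝ × ℝ | 0 < p.2} (x, t) →
        cstar * |deriv (fun y => φ y t) x| ≤ deriv (fun s => φ x s) t) :
    ∀ t : ℝ, 0 < t →
      {x : ℝ | w x t < 0} = {x : ℝ | Metric.infDist x Ω > cstar * t} ∧
      {x : ℝ | 0 < w x t} = {x : ℝ | Metric.infDist x Ω < cstar * t} := by
  -- bounds
  obtain ⟨Bg, hBg⟩ := hgbd
  obtain ⟨Bw, hBw⟩ := hwbd
  have hBg0 : 0 ≤ Bg := le_trans (abs_nonneg _) (hBg 0)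
  have hBw0 : 0 ≤ Bw := le_trans (abs_nonneg _) (hBw 0 0 le_rfl)
  set B₀ : ℝ := Bg + Bw + 1 with hB₀def
  have hB₀ : 0 < B₀ := by rw [hB₀def]; linarith
  have hgub : ∀ z : ℝ, g z ≤ B₀ := fun z => by
    have := abs_le.1 (hBg z); rw [hB₀def]; linarith [this.2]
  have hglb : ∀ z : ℝ, -B₀ ≤ g z := fun z => by
    have := abs_le.1 (hBg z); rw [hB₀def]; linarith [this.1]
  have hwub : ∀ x t : ℝ, 0 ≤ t → w x t ≤ B₀ := fun x t ht => by
    have := abs_le.1 (hBw x t ht); rw [hB₀def]; linarith [this.2]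
  have hwlb : ∀ x t : ℝ, 0 ≤ t → -B₀ ≤ w x t := fun x t ht => by
    have := abs_le.1 (hBw x t ht); rw [hB₀def]; linarith [this.1]
  -- structure of Ω
  obtain ⟨hbdd1, hbdd2⟩ := isBounded_iff_bddBelow_bddAbove.1 hΩbd
  set a : ℝ := sInf Ω with ha
  set b : ℝ := sSup Ω with hb
  have hsubI : Ω ⊆ Icc a b := fun z hz => ⟨csInf_le hbdd1 hz, le_csSup hbdd2 hz⟩
  have hclI : closure Ω ⊆ Icc a b := closure_minimal hsubI isClosed_Icc
  have hIooΩ : Ioo a b ⊆ Ω := by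
    intro z hz
    obtain ⟨u, huΩ, huz⟩ := exists_lt_of_csInf_lt hΩne hz.1
    obtain ⟨v, hvΩ, hzv⟩ := exists_lt_of_lt_csSup hΩne hz.2
    exact hΩint.out huΩ hvΩ ⟨huz.le, hzv.le⟩
  have hgneg' : ∀ z : ℝ, (z < a ∨ b < z) → g z < 0 := by
    intro z hz
    refine hgneg z (fun hcl => ?_)
    have := hclI hcl
    rw [mem_Icc] at this
    rcases hz with h | h <;> linarith [this.1, this.2]
  have hgcont : Continuous g := hg1.continuous
  have hanotΩ : a ∉ Ω := by
    intro haΩ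
    have hga : g a ≤ 0 := by
      have htd : Tendsto g (𝓝[<] a) (𝓝 (g a)) :=
        (hgcont.continuousAt).continuousWithinAt.tendsto
      refine le_of_tendsto htd (eventually_of_mem self_mem_nhdsWithin (fun z hz => ?_))
      exact (hgneg' z (Or.inl hz)).le
    exact absurd (hgpos a haΩ) (not_lt.2 hga)
  have hbnotΩ : b ∉ Ω := by
    intro hbΩ
    have hgb : g b ≤ 0 := by
      have htd : Tendsto g (𝓝[>] b) (𝓝 (g b)) :=
        (hgcont.continuousAt).continuousWithinAt.tendsto
      refine le_of_tendsto htd (eventually_of_mem self_mem_nhdsWithin (fun z hz => ?_))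
      exact (hgneg' z (Or.inr hz)).le
    exact absurd (hgpos b hbΩ) (not_lt.2 hgb)
  have haxb : a ≤ xbar ∧ xbar ≤ b := ⟨csInf_le hbdd1 hxbar, le_csSup hbdd2 hxbar⟩
  -- infDist upper bound
  have hdist_le : ∀ x : ℝ, Metric.infDist x Ω ≤ max (max (a - x) (x - b)) 0 := by
    intro x
    rcases le_or_gt x a with hxa | hxa
    · refine le_trans (le_of_forall_pos_le_add (fun δ hδ => ?_)) (le_max_of_le_left (le_max_left _ _))
      obtain ⟨y, hyΩ, hy⟩ := exists_lt_of_csInf_lt hΩne (show sInf Ω < a + δ by rw [← ha]; linarith [csInf_le hbdd1 hΩne.choose_spec]; )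
      have h1 : Metric.infDist x Ω ≤ dist x y := Metric.infDist_le_dist_of_mem hyΩ
      have h2 : a ≤ y := csInf_le hbdd1 hyΩ |>.trans (le_refl _) |>.trans (le_refl _)
      have h3 : dist x y = y - x := by
        rw [Real.dist_eq, abs_of_nonpos (by linarith [csInf_le hbdd1 hyΩ])]
        ring
      rw [h3] at h1
      linarith [csInf_le hbdd1 hyΩ]
    · rcases le_or_gt b x with hbx | hbx
      · refine le_trans (le_of_forall_pos_le_add (fun δ hδ => ?_)) (le_max_of_le_left (le_max_right _ _))
        obtain ⟨y, hyΩ, hy⟩ := exists_lt_of_lt_csSup hΩne (show b - δ < sSup Ω by rw [← hb]; linarith)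
        have h1 : Metric.infDist x Ω ≤ dist x y := Metric.infDist_le_dist_of_mem hyΩ
        have h4 : y ≤ b := le_csSup hbdd2 hyΩ
        have h3 : dist x y = x - y := by
          rw [Real.dist_eq, abs_of_nonneg (by linarith)]
        rw [h3] at h1
        linarith
      · have : x ∈ Ω := hIooΩ ⟨hxa, hbx⟩
        rw [Metric.infDist_zero_of_mem this]
        exact le_max_right _ _
  -- claim 2 packaged
  have claim2 : ∀ x t : ℝ, 0 < t → cstar * t < Metric.infDist x Ω → w x t < 0 := by
    intro x t ht hd
    have hcases : cstar * t < x - b ∨ cstar * t < a - x := by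
      by_contra hcon
      push_neg at hcon
      have h1 := hdist_le x
      have h2 : max (max (a - x) (x - b)) 0 ≤ cstar * t := by
        apply max_le (max_le _ _) (by positivity)
        · exact hcon.2
        · exact hcon.1
      linarith
    rcases hcases with hcase | hcase
    · -- right side
      set c'' : ℝ := (cstar + (x - b)/t)/2 with hc''def
      have hr : cstar < (x - b)/t := by rw [lt_div_iff₀ ht]; linarith [mul_comm cstar t]
      have hc''1 : cstar < c'' := by rw [hc''def]; linarith
      have hc''2 : c''*t < x - b := by
        have : c'' < (x - b)/t := by rw [hc''def]; linarith
        calc c''*t < ((x - b)/t)*t := by exact mul_lt_mul_of_pos_right this ht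
          _ = x - b := div_mul_cancel₀ _ (ne_of_gt ht)
      set z₁ : ℝ := (b + (x - c''*t))/2 with hz₁def
      have hz₁1 : b < z₁ := by rw [hz₁def]; linarith
      have hz₁2 : z₁ < x - c''*t := by rw [hz₁def]; linarith
      have hgz₁ : g z₁ < 0 := hgneg' z₁ (Or.inr hz₁1)
      set m : ℝ := -g z₁ with hmdef
      have hm : 0 < m := by rw [hmdef]; linarith
      have hfar : ∀ y : ℝ, (1:ℝ) * z₁ ≤ 1 * y → g y ≤ -m := by
        intro y hy
        rw [one_mul, one_mul] at hy
        have hgy : g y ≤ g z₁ := by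
          rcases eq_or_lt_of_le hy with h | h
          · rw [h]
          · exact (hganti (mem_Ici.2 (by linarith [haxb.2])) (mem_Ici.2 (by linarith [haxb.2])) h).le
        rw [hmdef]; linarith
      exact claim2_aux cstar hc g w hwcont hwinit hsub B₀ hB₀ hgub hwub
        1 (Or.inl rfl) z₁ m hm hfar x t c'' c'' ht hc''1 hc''1
        (by rw [one_mul, one_mul]; linarith)
    · -- left side
      set c'' : ℝ := (cstar + (a - x)/t)/2 with hc''def
      have hr : cstar < (a - x)/t := by rw [lt_div_iff₀ ht]; linarith [mul_comm cstar t]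
      have hc''1 : cstar < c'' := by rw [hc''def]; linarith
      have hc''2 : c''*t < a - x := by
        have : c'' < (a - x)/t := by rw [hc''def]; linarith
        calc c''*t < ((a - x)/t)*t := by exact mul_lt_mul_of_pos_right this ht
          _ = a - x := div_mul_cancel₀ _ (ne_of_gt ht)
      set z₁ : ℝ := ((x + c''*t) + a)/2 with hz₁def
      have hz₁1 : z₁ < a := by rw [hz₁def]; linarith
      have hz₁2 : x + c''*t < z₁ := by rw [hz₁def]; linarith
      have hgz₁ : g z₁ < 0 := hgneg' z₁ (Or.inl hz₁1)
      set m : ℝ := -g z₁ with hmdef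
      have hm : 0 < m := by rw [hmdef]; linarith
      have hfar : ∀ y : ℝ, (-1:ℝ) * z₁ ≤ -1 * y → g y ≤ -m := by
        intro y hy
        have hy' : y ≤ z₁ := by nlinarith [hy]
        have hgy : g y ≤ g z₁ := by
          rcases eq_or_lt_of_le hy' with h | h
          · rw [h]
          · exact (hgmono (mem_Iic.2 (by linarith [haxb.1])) (mem_Iic.2 (by linarith [haxb.1])) h).le
        rw [hmdef]; linarith
      exact claim2_aux cstar hc g w hwcont hwinit hsub B₀ hB₀ hgub hwub
        (-1) (Or.inr rfl) z₁ m hm hfar x t c'' c'' ht hc''1 hc''1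
        (by nlinarith)
  -- claim 1 packaged
  have claim1 : ∀ x t : ℝ, 0 < t → Metric.infDist x Ω < cstar * t → 0 < w x t := by
    intro x t ht hd
    obtain ⟨y₀, hy₀Ω, hy₀d⟩ := (Metric.infDist_lt_iff hΩne).1 hd
    have hy₀I : a < y₀ ∧ y₀ < b := by
      have h1 := hsubI hy₀Ω
      rw [mem_Icc] at h1
      constructor
      · rcases eq_or_lt_of_le h1.1 with h | h
        · exact absurd (h ▸ hy₀Ω) hanotΩ
        · exact h
      · rcases eq_or_lt_of_le h1.2 with h | h
        · exact absurd (h ▸ hy₀Ω) hbnotΩ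
        · exact h
    set ζ : ℝ := min (y₀ - a) (b - y₀) / 2 with hζdef
    have hζ : 0 < ζ := by
      rw [hζdef]
      have h1 : 0 < min (y₀ - a) (b - y₀) :=
        lt_min (by linarith [hy₀I.1]) (by linarith [hy₀I.2])
      linarith
    have hζ1 : ζ ≤ (y₀ - a)/2 := by
      rw [hζdef]; have := min_le_left (y₀ - a) (b - y₀); linarith
    have hζ2 : ζ ≤ (b - y₀)/2 := by
      rw [hζdef]; have := min_le_right (y₀ - a) (b - y₀); linarith
    have hJΩ : Icc (y₀ - ζ) (y₀ + ζ) ⊆ Ω := by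
      intro z hz
      rw [mem_Icc] at hz
      exact hIooΩ ⟨by linarith [hy₀I.1], by linarith [hy₀I.2]⟩
    have hJne : (Icc (y₀ - ζ) (y₀ + ζ)).Nonempty :=
      ⟨y₀, mem_Icc.2 ⟨by linarith, by linarith⟩⟩
    obtain ⟨zm, hzmJ, hzmmin⟩ := isCompact_Icc.exists_isMinOn hJne hgcont.continuousOn
    set μ : ℝ := g zm with hμdef
    have hμ : 0 < μ := hgpos zm (hJΩ hzmJ)
    have hgJ : ∀ z : ℝ, |z - y₀| ≤ ζ → μ ≤ g z := by
      intro z hz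
      have h1 := abs_le.1 hz
      exact hzmmin (mem_Icc.2 ⟨by linarith [h1.1], by linarith [h1.2]⟩)
    set W₀ : ℝ := ζ + (μ/2 + B₀ + 1) with hW₀def
    have hW₀1 : ζ ≤ W₀ := by rw [hW₀def]; linarith
    have hKne : (Icc (y₀ - W₀) (y₀ + W₀)).Nonempty :=
      ⟨y₀, mem_Icc.2 ⟨by rw [hW₀def]; linarith, by rw [hW₀def]; linarith⟩⟩
    have hdercont : Continuous (fun z => |deriv g z|) :=
      (hg1.continuous_deriv le_rfl).abs
    obtain ⟨zL, hzLJ, hzLmax⟩ := isCompact_Icc.exists_isMaxOn hKne hdercont.continuousOn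
    set β : ℝ := |deriv g zL| + 1 with hβdef
    have hβ : 1 ≤ β := by rw [hβdef]; linarith [abs_nonneg (deriv g zL)]
    have hLip : ∀ u v : ℝ, u ∈ Icc (y₀ - W₀) (y₀ + W₀) → v ∈ Icc (y₀ - W₀) (y₀ + W₀) →
        |g v - g u| ≤ β * |v - u| := by
      intro u v hu hv
      have hdiff : ∀ z ∈ Icc (y₀ - W₀) (y₀ + W₀), DifferentiableAt ℝ g z :=
        fun z _ => (hg1.differentiable one_ne_zero).differentiableAt
      have hbound : ∀ z ∈ Icc (y₀ - W₀) (y₀ + W₀), ‖deriv g z‖ ≤ β := by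
        intro z hz
        rw [Real.norm_eq_abs]
        have h2 : |deriv g z| ≤ |deriv g zL| := hzLmax hz
        rw [hβdef]; linarith
      have h3 := Convex.norm_image_sub_le_of_norm_deriv_le hdiff hbound (convex_Icc _ _) hu hv
      simpa [Real.norm_eq_abs] using h3
    have hgMid : ∀ z : ℝ, ζ ≤ |z - y₀| → |z - y₀| ≤ ζ + (μ/2 + B₀ + 1) →
        μ - β*(|z - y₀| - ζ) ≤ g z := by
      intro z h1 h2
      have h2' : |z - y₀| ≤ W₀ := by rw [hW₀def]; exact h2
      rcases le_total y₀ z with hside | hside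
      · have habs : |z - y₀| = z - y₀ := abs_of_nonneg (by linarith)
        rw [habs] at h1 h2'
        have he : (y₀ + ζ) ∈ Icc (y₀ - W₀) (y₀ + W₀) :=
          mem_Icc.2 ⟨by linarith, by linarith⟩
        have hzK : z ∈ Icc (y₀ - W₀) (y₀ + W₀) :=
          mem_Icc.2 ⟨by linarith, by linarith⟩
        have h3 := hLip (y₀ + ζ) z he hzK
        have harg : |z - (y₀ + ζ)| = (z - y₀) - ζ := by
          rw [abs_of_nonneg (by linarith)]; ring
        rw [harg] at h3
        have h4 := abs_le.1 h3
        have hge := hgJ (y₀ + ζ) (by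
          rw [show (y₀ + ζ) - y₀ = ζ by ring, abs_of_nonneg hζ.le])
        rw [habs]
        linarith [h4.1]
      · have habs : |z - y₀| = y₀ - z := by
          rw [abs_of_nonpos (by linarith)]; ring
        rw [habs] at h1 h2'
        have he : (y₀ - ζ) ∈ Icc (y₀ - W₀) (y₀ + W₀) :=
          mem_Icc.2 ⟨by linarith, by linarith⟩
        have hzK : z ∈ Icc (y₀ - W₀) (y₀ + W₀) :=
          mem_Icc.2 ⟨by linarith, by linarith⟩
        have h3 := hLip (y₀ - ζ) z he hzK
        have harg : |z - (y₀ - ζ)| = (y₀ - z) - ζ := by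
          rw [abs_of_nonpos (by linarith)]; ring
        rw [harg] at h3
        have h4 := abs_le.1 h3
        have hge := hgJ (y₀ - ζ) (by
          rw [show (y₀ - ζ) - y₀ = -ζ by ring, abs_neg, abs_of_nonneg hζ.le])
        rw [habs]
        linarith [h4.1]
    have hxyd : |x - y₀| < cstar * t := by rw [← Real.dist_eq]; exact hy₀d
    exact claim1_aux cstar hc g w hwcont hwinit hsup B₀ hB₀ hglb hwlb
      y₀ ζ μ β hζ hμ hβ hgJ hgMid x t ht hxyd
  -- boundary cases and conclusion
  have hwt_cont : ∀ x : ℝ, ContinuousOn (fun s => w x s) (Ici 0) := by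
    intro x
    have hmap : Continuous (fun s : ℝ => ((x, s) : ℝ × ℝ)) :=
      continuous_const.prodMk continuous_id
    exact hwcont.comp hmap.continuousOn (fun s hs => hs)
  have hbdry_ge : ∀ x t : ℝ, 0 < t → Metric.infDist x Ω = cstar * t → 0 ≤ w x t := by
    intro x t ht heq
    have hev : ∀ᶠ s in 𝓝[>] t, 0 < w x s := by
      refine eventually_of_mem self_mem_nhdsWithin (fun s hs => ?_)
      have hs' : t < s := hs
      refine claim1 x s (by linarith) ?_
      rw [heq]
      exact mul_lt_mul_of_pos_left hs' hc
    have htd : Tendsto (fun s => w x s) (𝓝[>] t) (𝓝 (w x t)) := by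
      have h1 : ContinuousWithinAt (fun s => w x s) (Ici 0) t := hwt_cont x t (le_of_lt ht)
      exact (h1.mono (fun s hs => le_of_lt (lt_trans ht hs))).tendsto
    exact ge_of_tendsto htd (hev.mono (fun s hs => hs.le))
  have hbdry_le : ∀ x t : ℝ, 0 < t → Metric.infDist x Ω = cstar * t → w x t ≤ 0 := by
    intro x t ht heq
    have hnb : (𝓝[Ioo 0 t] t).NeBot := by
      rw [← mem_closure_iff_nhdsWithin_neBot, closure_Ioo ht.ne]
      exact ⟨ht.le, le_rfl⟩
    have hev : ∀ᶠ s in 𝓝[Ioo 0 t] t, w x s < 0 := by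
      refine eventually_of_mem self_mem_nhdsWithin (fun s hs => ?_)
      refine claim2 x s hs.1 ?_
      rw [heq]
      exact mul_lt_mul_of_pos_left hs.2 hc
    have htd : Tendsto (fun s => w x s) (𝓝[Ioo 0 t] t) (𝓝 (w x t)) := by
      have h1 : ContinuousWithinAt (fun s => w x s) (Ici 0) t := hwt_cont x t (le_of_lt ht)
      exact (h1.mono (fun s hs => hs.1.le)).tendsto
    exact le_of_tendsto htd (hev.mono (fun s hs => hs.le))
  intro t ht
  constructor
  · ext x
    simp only [mem_setOf_eq]
    constructor
    · intro hw
      by_contra hcon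
      push_neg at hcon
      rcases eq_or_lt_of_le hcon with h | h
      · exact absurd hw (not_lt.2 (hbdry_ge x t ht h))
      · exact absurd hw (not_lt.2 (le_of_lt (claim1 x t ht h)))
    · intro hd
      exact claim2 x t ht hd
  · ext x
    simp only [mem_setOf_eq]
    constructor
    · intro hw
      by_contra hcon
      push_neg at hcon
      rcases eq_or_lt_of_le hcon with h | h
      · exact absurd hw (not_lt.2 (hbdry_le x t ht h.symm))
      · exact absurd hw (not_lt.2 (le_of_lt (claim2 x t ht h)))
    · intro hd
      exact claim1 x t ht hd


end
end
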